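/- arXiv:2001.00687 — 6 statements merged into one kernel-verified Lean document; each statement's English description precedes it below -/
import Mathlib

section
/- Let α ∈ [0, π/2) and let A, B ∈ M_n(ℂ) be sector matrices of angle α. Then Re((A + B)^{-1}) ≤ (sec²(α)/4) · (Re(A^{-1}) + Re(B^{-1})) in the Loewner order. -/
open Matrix
open scoped ComplexOrder

/-- The real (Hermitian) part of a complex matrix: `Re A = (A + Aᴴ)/2`. -/
noncomputable def matRe {n : ℕ} (A : Matrix (Fin n) (Fin n) ℂ) : Matrix (Fin n) (Fin n) ℂ :=
  (2⁻¹ : ℂ) • (A + Aᴴ)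

/-- `A` is a sector matrix of angle `α`: its numerical range is contained in
`S_α = {z : Re z > 0, |Im z| ≤ tan α · Re z}`. -/
def InSector {n : ℕ} (α : ℝ) (A : Matrix (Fin n) (Fin n) ℂ) : Prop :=
  ∀ x : Fin n → ℂ, star x ⬝ᵥ x = 1 →
    0 < (star x ⬝ᵥ A *ᵥ x).re ∧
      |(star x ⬝ᵥ A *ᵥ x).im| ≤ Real.tan α * (star x ⬝ᵥ A *ᵥ x).re

namespace SectorAux

variable {n : ℕ}

noncomputable def matIm {n : ℕ} (A : Matrix (Fin n) (Fin n) ℂ) : Matrix (Fin n) (Fin n) ℂ :=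
  (-Complex.I * 2⁻¹) • (A - Aᴴ)

lemma matRe_isHermitian (A : Matrix (Fin n) (Fin n) ℂ) : (matRe A).IsHermitian := by
  ext i j
  simp only [matRe, Matrix.conjTranspose_apply, Matrix.smul_apply, Matrix.add_apply, smul_eq_mul,
    star_mul', star_add, star_star, Complex.star_def]
  rw [Complex.ext_iff]
  constructor <;> simp <;> ring

lemma matIm_isHermitian (A : Matrix (Fin n) (Fin n) ℂ) : (matIm A).IsHermitian := by
  ext i j
  simp only [matIm, Matrix.conjTranspose_apply, Matrix.smul_apply, Matrix.sub_apply, smul_eq_mul,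
    star_mul', star_sub, star_star, Complex.star_def]
  rw [Complex.ext_iff]
  constructor <;> simp <;> ring

lemma matRe_add_smul_matIm (A : Matrix (Fin n) (Fin n) ℂ) :
    matRe A + Complex.I • matIm A = A := by
  ext i j
  simp only [matRe, matIm, Matrix.add_apply, Matrix.smul_apply, Matrix.sub_apply,
    Matrix.conjTranspose_apply, smul_eq_mul, Complex.star_def]
  rw [Complex.ext_iff]
  constructor <;> simp <;> ring

lemma conjTranspose_eq (A : Matrix (Fin n) (Fin n) ℂ) :
    Aᴴ = matRe A - Complex.I • matIm A := by
  ext i j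
  simp only [matRe, matIm, Matrix.sub_apply, Matrix.smul_apply, Matrix.add_apply,
    Matrix.conjTranspose_apply, smul_eq_mul, Complex.star_def]
  rw [Complex.ext_iff]
  constructor <;> simp <;> ring

lemma matRe_add (A B : Matrix (Fin n) (Fin n) ℂ) : matRe (A + B) = matRe A + matRe B := by
  simp only [matRe, Matrix.conjTranspose_add, smul_add]
  abel

lemma qf_conjTranspose (A : Matrix (Fin n) (Fin n) ℂ) (x : Fin n → ℂ) :
    star x ⬝ᵥ Aᴴ *ᵥ x = star (star x ⬝ᵥ A *ᵥ x) := by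
  rw [Matrix.dotProduct_mulVec, ← Matrix.star_mulVec, Matrix.star_dotProduct]

lemma qf_matRe (A : Matrix (Fin n) (Fin n) ℂ) (x : Fin n → ℂ) :
    star x ⬝ᵥ matRe A *ᵥ x = (((star x ⬝ᵥ A *ᵥ x).re : ℝ) : ℂ) := by
  simp only [matRe, Matrix.smul_mulVec, Matrix.add_mulVec, dotProduct_smul,
    dotProduct_add, qf_conjTranspose, smul_eq_mul]
  set z := star x ⬝ᵥ A *ᵥ x
  rw [Complex.ext_iff]
  constructor <;> simp [Complex.star_def] <;> ring

lemma qf_matIm (A : Matrix (Fin n) (Fin n) ℂ) (x : Fin n → ℂ) :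
    star x ⬝ᵥ matIm A *ᵥ x = (((star x ⬝ᵥ A *ᵥ x).im : ℝ) : ℂ) := by
  simp only [matIm, Matrix.smul_mulVec, Matrix.sub_mulVec, dotProduct_smul,
    dotProduct_sub, qf_conjTranspose, smul_eq_mul]
  set z := star x ⬝ᵥ A *ᵥ x
  rw [Complex.ext_iff]
  constructor <;> simp [Complex.star_def] <;> ring

lemma dotProduct_self_re_pos {x : Fin n → ℂ} (hx : x ≠ 0) :
    0 < (star x ⬝ᵥ x).re ∧ (star x ⬝ᵥ x).im = 0 := by
  have h1 : (0 : ℂ) ≤ star x ⬝ᵥ x := by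
    simpa using Matrix.dotProduct_star_self_nonneg (star x)
  have h2 : star x ⬝ᵥ x ≠ 0 := by
    intro h
    apply hx
    have := (dotProduct_star_self_eq_zero (v := star x)).mp (by simpa using h)
    simpa using congrArg star this
  rw [Complex.nonneg_iff] at h1
  refine ⟨lt_of_le_of_ne h1.1 ?_, h1.2.symm⟩
  intro h
  exact h2 (Complex.ext h.symm (by simpa using h1.2.symm))

lemma sector_bound {α : ℝ} {A : Matrix (Fin n) (Fin n) ℂ} (hA : InSector α A)
    (x : Fin n → ℂ) :
    |(star x ⬝ᵥ A *ᵥ x).im| ≤ Real.tan α * (star x ⬝ᵥ A *ᵥ x).re ∧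
      (x ≠ 0 → 0 < (star x ⬝ᵥ A *ᵥ x).re) := by
  rcases eq_or_ne x 0 with rfl | hx
  · simp
  obtain ⟨hpos, him⟩ := dotProduct_self_re_pos hx
  set t : ℝ := Real.sqrt (star x ⬝ᵥ x).re with ht
  have htpos : 0 < t := Real.sqrt_pos.mpr hpos
  set s : ℝ := t⁻¹ ^ 2 with hs'
  have hs : (0:ℝ) < s := by positivity
  set u : Fin n → ℂ := ((t⁻¹ : ℝ) : ℂ) • x with hu
  have hscale : ∀ M : Matrix (Fin n) (Fin n) ℂ,
      star u ⬝ᵥ M *ᵥ u = ((s : ℝ) : ℂ) * (star x ⬝ᵥ M *ᵥ x) := by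
    intro M
    simp only [hu, star_smul, Matrix.mulVec_smul, smul_dotProduct, dotProduct_smul]
    rw [hs']
    push_cast [smul_eq_mul, Complex.star_def, map_inv₀, Complex.conj_ofReal]
    ring
  have hunit : star u ⬝ᵥ u = 1 := by
    have h := hscale 1
    simp only [Matrix.one_mulVec] at h
    rw [h]
    have hxx : star x ⬝ᵥ x = (((star x ⬝ᵥ x).re : ℝ) : ℂ) := Complex.ext rfl (by simp [him])
    rw [hxx]
    have ht2 : t ^ 2 = (star x ⬝ᵥ x).re := Real.sq_sqrt hpos.le
    rw [← ht2, hs']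
    push_cast
    field_simp
  obtain ⟨h1, h2⟩ := hA u hunit
  rw [hscale A] at h1 h2
  rw [Complex.re_ofReal_mul] at h1
  rw [Complex.im_ofReal_mul, Complex.re_ofReal_mul, abs_mul, abs_of_pos hs] at h2
  constructor
  · have := (mul_le_mul_iff_right₀ hs).mp (by linarith [h2] : s * |(star x ⬝ᵥ A *ᵥ x).im| ≤ s * (Real.tan α * (star x ⬝ᵥ A *ᵥ x).re))
    exact this
  · intro _
    nlinarith
lemma rsmul_psd {M : Matrix (Fin n) (Fin n) ℂ} (hM : M.PosSemidef) {r : ℝ} (hr : 0 ≤ r) :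
    (r • M).PosSemidef := by
  refine posSemidef_iff_dotProduct_mulVec.mpr ⟨?_, ?_⟩
  · have h := hM.1
    ext i j
    simp only [Matrix.conjTranspose_apply, Matrix.smul_apply]
    rw [← congrFun (congrFun h i) j]
    simp [Matrix.conjTranspose_apply, Complex.star_def, Complex.ext_iff, Complex.smul_re,
      Complex.smul_im]
  · intro x
    have h := hM.dotProduct_mulVec_nonneg x
    have : star x ⬝ᵥ (r • M) *ᵥ x = ((r:ℝ):ℂ) * (star x ⬝ᵥ M *ᵥ x) := by
      simp [Matrix.smul_mulVec, dotProduct_smul, Complex.real_smul]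
    rw [this]
    rw [Complex.nonneg_iff] at h ⊢
    constructor
    · rw [Complex.re_ofReal_mul]
      exact mul_nonneg hr h.1
    · rw [Complex.im_ofReal_mul]
      simp [← h.2]

lemma herm_sq_le {c : ℝ} (hc : 0 ≤ c) {M : Matrix (Fin n) (Fin n) ℂ} (hM : M.IsHermitian)
    (hb : ∀ x : Fin n → ℂ, |(star x ⬝ᵥ M *ᵥ x).re| ≤ c * (star x ⬝ᵥ x).re) :
    ((c ^ 2 : ℝ) • (1 : Matrix (Fin n) (Fin n) ℂ) - M * M).PosSemidef := by
  classical
  set U : Matrix (Fin n) (Fin n) ℂ := (hM.eigenvectorUnitary : Matrix (Fin n) (Fin n) ℂ) with hU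
  have hUU : U * star U = 1 := (Matrix.mem_unitaryGroup_iff).mp hM.eigenvectorUnitary.2
  have hUU' : star U * U = 1 := (Matrix.mem_unitaryGroup_iff').mp hM.eigenvectorUnitary.2
  have heig : ∀ i, |hM.eigenvalues i| ≤ c := by
    intro i
    set v : Fin n → ℂ := ⇑(hM.eigenvectorBasis i) with hv
    have hnorm : (star v ⬝ᵥ v).re = 1 := by
      have h1 : (inner ℂ (hM.eigenvectorBasis i) (hM.eigenvectorBasis i) : ℂ)
          = star v ⬝ᵥ v := by rw [EuclideanSpace.inner_eq_star_dotProduct, dotProduct_comm]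
      have h2 : (inner ℂ (hM.eigenvectorBasis i) (hM.eigenvectorBasis i) : ℂ) = 1 := by
        rw [inner_self_eq_norm_sq_to_K]
        rw [hM.eigenvectorBasis.orthonormal.1 i]
        norm_num
      rw [← h1, h2]
      norm_num
    have hval : hM.eigenvalues i = (star v ⬝ᵥ M *ᵥ v).re := by
      have := hM.eigenvalues_eq i
      simpa using this
    have := hb v
    rw [hnorm, mul_one, ← hval] at this
    exact this
  have hdiagpsd : (Matrix.diagonal (fun i => ((c ^ 2 - hM.eigenvalues i ^ 2 : ℝ) : ℂ))).PosSemidef := by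
    rw [Matrix.posSemidef_diagonal_iff]
    intro i
    rw [Complex.zero_le_real]
    have := heig i
    nlinarith [abs_nonneg (hM.eigenvalues i), sq_abs (hM.eigenvalues i)]
  have key : (c ^ 2 : ℝ) • (1 : Matrix (Fin n) (Fin n) ℂ) - M * M
      = U * Matrix.diagonal (fun i => ((c ^ 2 - hM.eigenvalues i ^ 2 : ℝ) : ℂ)) * star U := by
    have hspec := hM.spectral_theorem
    rw [Unitary.conjStarAlgAut_apply, ← hU] at hspec
    have hM2 : M * M = U * Matrix.diagonal (fun i => ((hM.eigenvalues i ^ 2 : ℝ) : ℂ)) * star U := by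
      conv_lhs => rw [hspec]
      rw [show ∀ (D : Matrix (Fin n) (Fin n) ℂ), (U * D * star U) * (U * D * star U)
          = U * (D * (star U * U) * D) * star U by intros; noncomm_ring]
      rw [hUU']
      congr 1
      congr 1
      rw [mul_one, Matrix.diagonal_mul_diagonal]
      congr 1
      funext i
      push_cast
      simp [pow_two]
    have h1 : (c ^ 2 : ℝ) • (1 : Matrix (Fin n) (Fin n) ℂ)
        = U * Matrix.diagonal (fun _ => ((c ^ 2 : ℝ) : ℂ)) * star U := by
      have : Matrix.diagonal (fun _ : Fin n => ((c ^ 2 : ℝ) : ℂ))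
          = ((c ^ 2 : ℝ) : ℂ) • (1 : Matrix (Fin n) (Fin n) ℂ) := by
        ext i j
        by_cases h : i = j <;> simp [Matrix.diagonal_apply, h]
      rw [this]
      rw [Matrix.mul_smul, Matrix.smul_mul, mul_one, hUU]
      ext i j
      simp [Matrix.smul_apply, Complex.real_smul]
    rw [h1, hM2, ← Matrix.sub_mul, ← Matrix.mul_sub]
    congr 2
    rw [Matrix.diagonal_sub]
    congr 1
    funext i
    push_cast
    ring
  rw [key]
  have := hdiagpsd.mul_mul_conjTranspose_same U
  rwa [← Matrix.star_eq_conjTranspose] at this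

lemma isUnit_det_of_matRe_posDef {A : Matrix (Fin n) (Fin n) ℂ} (h : (matRe A).PosDef) :
    IsUnit A.det := by
  rw [isUnit_iff_ne_zero]
  intro hdet
  obtain ⟨v, hv, hAv⟩ := (Matrix.exists_mulVec_eq_zero_iff).mpr hdet
  have h2 := h.dotProduct_mulVec_pos hv
  rw [qf_matRe, hAv] at h2
  simp at h2

lemma matRe_inv {A : Matrix (Fin n) (Fin n) ℂ} (hu : IsUnit A.det) :
    matRe A⁻¹ = (A⁻¹)ᴴ * matRe A * A⁻¹ := by
  have hu' : IsUnit Aᴴ.det := by rw [Matrix.det_conjTranspose]; exact hu.star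
  rw [Matrix.conjTranspose_nonsing_inv]
  simp only [matRe]
  rw [Matrix.mul_smul, Matrix.smul_mul]
  congr 1
  rw [Matrix.mul_add, Matrix.add_mul]
  rw [Matrix.mul_assoc, Matrix.mul_nonsing_inv _ hu, Matrix.mul_one]
  rw [Matrix.nonsing_inv_mul _ hu']
  rw [Matrix.one_mul, Matrix.conjTranspose_nonsing_inv, add_comm]

/-- `Aᴴ H⁻¹ A = H + K H⁻¹ K` where `H = Re A`, `K = Im A`. -/
lemma conj_expand {A : Matrix (Fin n) (Fin n) ℂ} (hu : IsUnit (matRe A).det) :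
    Aᴴ * (matRe A)⁻¹ * A = matRe A + matIm A * (matRe A)⁻¹ * matIm A := by
  set H := matRe A
  set K := matIm A
  have hA : A = H + Complex.I • K := (matRe_add_smul_matIm A).symm
  have hAH : Aᴴ = H - Complex.I • K := conjTranspose_eq A
  rw [hAH]
  conv_lhs => rw [hA]
  rw [Matrix.sub_mul, Matrix.mul_add, Matrix.sub_mul, Matrix.sub_mul]
  rw [Matrix.mul_nonsing_inv _ hu, Matrix.one_mul, Matrix.one_mul]
  simp only [Matrix.smul_mul, Matrix.mul_smul, smul_smul, Complex.I_mul_I,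
    Matrix.nonsing_inv_mul_cancel_right _ _ hu, neg_one_smul]
  abel

lemma sector_posDef {α : ℝ} {A : Matrix (Fin n) (Fin n) ℂ} (hA : InSector α A) :
    (matRe A).PosDef := by
  refine PosDef.of_dotProduct_mulVec_pos (matRe_isHermitian A) (fun x hx => ?_)
  rw [qf_matRe, Complex.zero_lt_real]
  exact (sector_bound hA x).2 hx

lemma herm_shift {P : Matrix (Fin n) (Fin n) ℂ} (hP : P.IsHermitian) (x w : Fin n → ℂ) :
    star x ⬝ᵥ P *ᵥ w = star (P *ᵥ x) ⬝ᵥ w := by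
  rw [Matrix.dotProduct_mulVec, Matrix.star_mulVec, hP.eq]

/-- the inner conjugation identity `A⁻¹ᴴ (Aᴴ X A) A⁻¹ = X` -/
lemma sandwich {A X : Matrix (Fin n) (Fin n) ℂ} (hu : IsUnit A.det) :
    (A⁻¹)ᴴ * (Aᴴ * X * A) * A⁻¹ = X := by
  have hu' : IsUnit Aᴴ.det := by rw [Matrix.det_conjTranspose]; exact hu.star
  rw [Matrix.conjTranspose_nonsing_inv, Matrix.mul_assoc Aᴴ X A,
    Matrix.nonsing_inv_mul_cancel_left _ _ hu',
    Matrix.mul_nonsing_inv_cancel_right _ _ hu]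

lemma amhm {H G : Matrix (Fin n) (Fin n) ℂ} (hH : H.PosDef) (hG : G.PosDef) :
    ((4⁻¹ : ℝ) • (H⁻¹ + G⁻¹) - (H + G)⁻¹).PosSemidef := by
  have huH : IsUnit H.det := isUnit_iff_ne_zero.mpr hH.det_pos.ne'
  have huG : IsUnit G.det := isUnit_iff_ne_zero.mpr hG.det_pos.ne'
  have hX : H⁻¹.PosDef := hH.inv
  have hY : G⁻¹.PosDef := hG.inv
  have hXY : (H⁻¹ + G⁻¹).PosDef := hX.add hY
  have huXY : IsUnit (H⁻¹ + G⁻¹).det := isUnit_iff_ne_zero.mpr hXY.det_pos.ne'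
  set X := H⁻¹
  set Y := G⁻¹
  set W := (X + Y)⁻¹ with hW
  have hfact : H * (X + Y) * G = G + H := by
    rw [Matrix.mul_add, Matrix.mul_nonsing_inv _ huH, Matrix.add_mul, Matrix.one_mul,
      Matrix.mul_assoc, Matrix.nonsing_inv_mul _ huG, Matrix.mul_one]
  have hfact' : G * (X + Y) * H = H + G := by
    rw [Matrix.mul_add, Matrix.mul_nonsing_inv _ huG, Matrix.add_mul, Matrix.one_mul,
      Matrix.mul_assoc, Matrix.nonsing_inv_mul _ huH, Matrix.mul_one]
    abel
  have hinv1 : (H + G)⁻¹ = X * W * Y := by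
    rw [← hfact']
    rw [Matrix.mul_inv_rev, Matrix.mul_inv_rev]
    rw [← hW, Matrix.mul_assoc]
  have hinv2 : (H + G)⁻¹ = Y * W * X := by
    have : H + G = G + H := by abel
    rw [this, ← hfact]
    rw [Matrix.mul_inv_rev, Matrix.mul_inv_rev]
    rw [← hW, Matrix.mul_assoc]
  have hXWX : X * W * X = X - X * W * Y := by
    have h1 : X * W * (X + Y) = X := Matrix.nonsing_inv_mul_cancel_right _ _ huXY
    rw [Matrix.mul_add] at h1
    linear_combination (norm := abel) h1
  have hYWY : Y * W * Y = Y - Y * W * X := by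
    have h1 : Y * W * (X + Y) = Y := Matrix.nonsing_inv_mul_cancel_right _ _ huXY
    rw [Matrix.mul_add] at h1
    linear_combination (norm := abel) h1
  have key : (X - Y) * W * (X - Y) = X + Y - (H+G)⁻¹ - (H+G)⁻¹ - (H+G)⁻¹ - (H+G)⁻¹ := by
    rw [Matrix.sub_mul, Matrix.mul_sub, Matrix.sub_mul, Matrix.sub_mul]
    rw [hXWX, hYWY, ← hinv1, ← hinv2]
    abel
  have hB : (X - Y)ᴴ = X - Y := by
    rw [Matrix.conjTranspose_sub, hX.isHermitian.eq, hY.isHermitian.eq]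
  have hpsd : ((X - Y) * W * (X - Y)).PosSemidef := by
    have := (hXY.inv.posSemidef).conjTranspose_mul_mul_same (X - Y)
    rwa [hB] at this
  have heq : (4⁻¹ : ℝ) • (X + Y) - (H + G)⁻¹ = (4⁻¹ : ℝ) • ((X - Y) * W * (X - Y)) := by
    rw [key]
    set Z := (H+G)⁻¹
    module
  rw [heq]
  exact rsmul_psd hpsd (by norm_num)

lemma inv_sub_matRe_inv_psd {C : Matrix (Fin n) (Fin n) ℂ} (hC : (matRe C).PosDef) :
    ((matRe C)⁻¹ - matRe C⁻¹).PosSemidef := by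
  have hu : IsUnit C.det := isUnit_det_of_matRe_posDef hC
  have huH : IsUnit (matRe C).det := isUnit_iff_ne_zero.mpr hC.det_pos.ne'
  set H := matRe C
  set K := matIm C
  have key : H⁻¹ - matRe C⁻¹ = (K * C⁻¹)ᴴ * H⁻¹ * (K * C⁻¹) := by
    have h1 : H⁻¹ = (C⁻¹)ᴴ * (Cᴴ * H⁻¹ * C) * C⁻¹ := (sandwich hu).symm
    have h2 : Cᴴ * H⁻¹ * C = H + K * H⁻¹ * K := conj_expand huH
    rw [matRe_inv hu]
    conv_lhs => rw [h1, h2]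
    rw [Matrix.mul_add, Matrix.add_mul]
    rw [Matrix.conjTranspose_mul, (matIm_isHermitian C).eq]
    noncomm_ring
  rw [key]
  exact (hC.inv.posSemidef).conjTranspose_mul_mul_same _

open scoped MatrixOrder in
lemma sec_bound {α : ℝ} (hα : α ∈ Set.Ico 0 (Real.pi / 2)) {A : Matrix (Fin n) (Fin n) ℂ}
    (hA : InSector α A) :
    ((((Real.cos α)⁻¹ ^ 2 : ℝ)) • matRe A⁻¹ - (matRe A)⁻¹).PosSemidef := by
  obtain ⟨hα0, hα2⟩ := hα
  have hcos : 0 < Real.cos α :=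
    Real.cos_pos_of_mem_Ioo ⟨by linarith [Real.pi_pos], hα2⟩
  have htan : 0 ≤ Real.tan α := Real.tan_nonneg_of_nonneg_of_le_pi_div_two hα0 hα2.le
  have hH : (matRe A).PosDef := sector_posDef hA
  have hu : IsUnit A.det := isUnit_det_of_matRe_posDef hH
  have huH : IsUnit (matRe A).det := isUnit_iff_ne_zero.mpr hH.det_pos.ne'
  set S := CFC.sqrt (matRe A) with hSdef
  have hSpsd : S.PosSemidef := (CFC.sqrt_nonneg (matRe A)).posSemidef
  have hSH : S.IsHermitian := hSpsd.1
  have hSS : S * S = matRe A := CFC.sqrt_mul_sqrt_self (matRe A) hH.posSemidef.nonneg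
  have hdetS : IsUnit S.det := by
    rw [isUnit_iff_ne_zero]
    intro h0
    have hd : (matRe A).det = 0 := by rw [← hSS, Matrix.det_mul, h0, mul_zero]
    exact (isUnit_iff_ne_zero.mp huH) hd
  have hSinvH : (S⁻¹).IsHermitian := by
    rw [Matrix.IsHermitian, Matrix.conjTranspose_nonsing_inv, hSH.eq]
  set M := S⁻¹ * matIm A * S⁻¹ with hMdef
  have hMH : M.IsHermitian := by
    rw [Matrix.IsHermitian, hMdef, Matrix.conjTranspose_mul, Matrix.conjTranspose_mul,
      hSinvH.eq, (matIm_isHermitian A).eq, Matrix.mul_assoc]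
  have hbound : ∀ x : Fin n → ℂ, |(star x ⬝ᵥ M *ᵥ x).re| ≤ Real.tan α * (star x ⬝ᵥ x).re := by
    intro x
    set y := S⁻¹ *ᵥ x with hy
    have e1 : star x ⬝ᵥ M *ᵥ x = star y ⬝ᵥ matIm A *ᵥ y := by
      rw [hMdef, ← Matrix.mulVec_mulVec, ← Matrix.mulVec_mulVec, herm_shift hSinvH]
    have e2 : star y ⬝ᵥ matRe A *ᵥ y = star x ⬝ᵥ x := by
      rw [← hSS, ← Matrix.mulVec_mulVec, herm_shift hSH]
      have hx : S *ᵥ y = x := by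
        rw [hy, Matrix.mulVec_mulVec, Matrix.mul_nonsing_inv _ hdetS, Matrix.one_mulVec]
      rw [hx]
    have e3 := (sector_bound hA y).1
    rw [e1, qf_matIm, Complex.ofReal_re]
    have e4 : (star y ⬝ᵥ A *ᵥ y).re = (star x ⬝ᵥ x).re := by
      have h5 := qf_matRe A y
      have h6 : ((star y ⬝ᵥ A *ᵥ y).re : ℂ) = star x ⬝ᵥ x := by rw [← h5, e2]
      have := congrArg Complex.re h6
      simpa using this
    rw [e4] at e3
    exact e3
  have hNpsd := herm_sq_le htan hMH hbound
  set N := ((Real.tan α ^ 2 : ℝ)) • (1 : Matrix (Fin n) (Fin n) ℂ) - M * M with hNdef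
  have hSM : S * M = matIm A * S⁻¹ := by
    rw [hMdef, ← Matrix.mul_assoc, Matrix.mul_nonsing_inv_cancel_left _ _ hdetS]
  have hMS : M * S = S⁻¹ * matIm A := by
    rw [hMdef, Matrix.nonsing_inv_mul_cancel_right _ _ hdetS]
  have hSinv2 : S⁻¹ * S⁻¹ = (matRe A)⁻¹ := by
    rw [← hSS, Matrix.mul_inv_rev]
  have id1 : S * N * S = (Real.tan α ^ 2 : ℝ) • matRe A - matIm A * (matRe A)⁻¹ * matIm A := by
    rw [hNdef, Matrix.mul_sub, Matrix.sub_mul]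
    have p1 : S * ((Real.tan α ^ 2 : ℝ) • (1 : Matrix (Fin n) (Fin n) ℂ)) * S
        = (Real.tan α ^ 2 : ℝ) • matRe A := by
      rw [Matrix.mul_smul, Matrix.mul_one, Matrix.smul_mul, hSS]
    have p2 : S * (M * M) * S = matIm A * (matRe A)⁻¹ * matIm A := by
      rw [← Matrix.mul_assoc, Matrix.mul_assoc (S * M) M S, hSM, hMS]
      have h7 : matIm A * S⁻¹ * (S⁻¹ * matIm A) = matIm A * (S⁻¹ * S⁻¹) * matIm A := by
        noncomm_ring
      rw [h7, hSinv2]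
    rw [p1, p2]
  have hsec : (Real.cos α)⁻¹ ^ 2 = 1 + Real.tan α ^ 2 := by
    have h := Real.inv_one_add_tan_sq hcos.ne'
    have h2 : (1 + Real.tan α ^ 2) = (Real.cos α ^ 2)⁻¹ := by rw [← h, inv_inv]
    rw [inv_pow, h2]
  have id2 : ((Real.cos α)⁻¹ ^ 2 : ℝ) • matRe A⁻¹ - (matRe A)⁻¹
      = (A⁻¹)ᴴ * ((Real.tan α ^ 2 : ℝ) • matRe A - matIm A * (matRe A)⁻¹ * matIm A) * A⁻¹ := by
    have hR : matRe A⁻¹ = (A⁻¹)ᴴ * matRe A * A⁻¹ := matRe_inv hu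
    have hc : (A⁻¹)ᴴ * (Aᴴ * (matRe A)⁻¹ * A) * A⁻¹ = (matRe A)⁻¹ := sandwich hu
    have hKHK : matIm A * (matRe A)⁻¹ * matIm A = Aᴴ * (matRe A)⁻¹ * A - matRe A := by
      rw [conj_expand huH]
      abel
    rw [hKHK, Matrix.mul_sub, Matrix.sub_mul, Matrix.mul_sub, Matrix.sub_mul, hc]
    rw [Matrix.mul_smul, Matrix.smul_mul, hR, hsec, add_smul, one_smul]
    abel
  have base := hNpsd.mul_mul_conjTranspose_same S
  rw [hSH.eq, id1] at base
  have base2 := base.conjTranspose_mul_mul_same A⁻¹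
  rw [← id2] at base2
  exact base2

end SectorAux

open SectorAux in
/-- For sector matrices `A, B` of angle `α ∈ [0, π/2)`,
`Re((A+B)⁻¹) ≤ (sec²(α)/4) · (Re(A⁻¹) + Re(B⁻¹))` in the Loewner order. -/
theorem stmt1 {n : ℕ} {α : ℝ} (hα : α ∈ Set.Ico 0 (Real.pi / 2))
    {A B : Matrix (Fin n) (Fin n) ℂ} (hA : InSector α A) (hB : InSector α B) :
    (((Real.cos α)⁻¹ ^ 2 / 4) • (matRe A⁻¹ + matRe B⁻¹) - matRe (A + B)⁻¹).PosSemidef := by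
  have hHA : (matRe A).PosDef := sector_posDef hA
  have hHB : (matRe B).PosDef := sector_posDef hB
  have hHC : (matRe (A + B)).PosDef := by
    rw [matRe_add]
    exact hHA.add hHB
  have E1 := sec_bound hα hA
  have E2 := sec_bound hα hB
  have E3 := amhm hHA hHB
  have E4 := inv_sub_matRe_inv_psd hHC
  rw [matRe_add] at E4
  have key : ((Real.cos α)⁻¹ ^ 2 / 4) • (matRe A⁻¹ + matRe B⁻¹) - matRe (A + B)⁻¹
      = (4⁻¹ : ℝ) • (((Real.cos α)⁻¹ ^ 2 : ℝ) • matRe A⁻¹ - (matRe A)⁻¹)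
        + (4⁻¹ : ℝ) • (((Real.cos α)⁻¹ ^ 2 : ℝ) • matRe B⁻¹ - (matRe B)⁻¹)
        + ((4⁻¹ : ℝ) • ((matRe A)⁻¹ + (matRe B)⁻¹) - (matRe A + matRe B)⁻¹)
        + ((matRe A + matRe B)⁻¹ - matRe (A + B)⁻¹) := by
    module
  rw [key]
  exact (((rsmul_psd E1 (by norm_num)).add (rsmul_psd E2 (by norm_num))).add E3).add E4
end

section
/- Let α ∈ [0, π/2) and let A, B ∈ M_n(ℂ) be sector matrices of angle α. Then the harmonic mean of |det A| and |det B| satisfies 2·|det A|·|det B|/(|det A| + |det B|) ≤ sec^{n}(α) · (2·det(Re A)·det(Re B)/(det(Re A) + det(Re B))), i.e., the harmonic mean of |det A| and |det B| is at most sec^n(α) times the harmonic mean of det(Re A) and det(Re B). -/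
open Matrix
open scoped ComplexOrder

/-- Quadratic-form sector bounds for arbitrary nonzero vectors. -/
lemma sector_quad {n : ℕ} {α : ℝ} {A : Matrix (Fin n) (Fin n) ℂ}
    (hA : InSector α A) (x : Fin n → ℂ) (hx : x ≠ 0) :
    0 < (star x ⬝ᵥ A *ᵥ x).re ∧
      |(star x ⬝ᵥ A *ᵥ x).im| ≤ Real.tan α * (star x ⬝ᵥ A *ᵥ x).re := by
  have hxx : 0 < star x ⬝ᵥ x := dotProduct_star_self_pos_iff.mpr hx
  rw [Complex.lt_def] at hxx
  have hre : 0 < (star x ⬝ᵥ x).re := by simpa using hxx.1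
  have him : (star x ⬝ᵥ x).im = 0 := by simpa using hxx.2.symm
  set t : ℝ := (star x ⬝ᵥ x).re with ht
  set s : ℝ := Real.sqrt t with hs
  have hs0 : 0 < s := Real.sqrt_pos.mpr hre
  have hs2 : s ^ 2 = t := Real.sq_sqrt hre.le
  have hxxc : star x ⬝ᵥ x = (t : ℂ) := by
    apply Complex.ext <;> simp [him, ht]
  set u : Fin n → ℂ := ((s⁻¹ : ℝ) : ℂ) • x with hu
  have hstaru : star u = ((s⁻¹ : ℝ) : ℂ) • star x := by
    simp [hu, star_smul, Complex.star_def, Complex.conj_ofReal]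
  have huu : star u ⬝ᵥ u = 1 := by
    rw [hu, hstaru, smul_dotProduct, dotProduct_smul, hxxc, smul_eq_mul, smul_eq_mul]
    rw [← Complex.ofReal_mul, ← Complex.ofReal_mul]
    norm_cast
    field_simp
    nlinarith [hs2]
  have hAu : star u ⬝ᵥ A *ᵥ u = ((s⁻¹ * s⁻¹ : ℝ) : ℂ) * (star x ⬝ᵥ A *ᵥ x) := by
    rw [hu, hstaru, mulVec_smul, smul_dotProduct, dotProduct_smul, smul_eq_mul, smul_eq_mul]
    push_cast
    ring
  obtain ⟨h1, h2⟩ := hA u huu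
  rw [hAu] at h1 h2
  have hc : (0:ℝ) < s⁻¹ * s⁻¹ := by positivity
  set z := star x ⬝ᵥ A *ᵥ x
  have hre' : (((s⁻¹ * s⁻¹ : ℝ) : ℂ) * z).re = (s⁻¹ * s⁻¹) * z.re := by simp
  have him' : (((s⁻¹ * s⁻¹ : ℝ) : ℂ) * z).im = (s⁻¹ * s⁻¹) * z.im := by simp
  rw [hre'] at h1
  rw [hre', him'] at h2
  constructor
  · rcases mul_pos_iff.mp h1 with ⟨_, h⟩ | ⟨h, _⟩
    · exact h
    · linarith
  · rw [abs_mul, abs_of_pos hc, show Real.tan α * ((s⁻¹ * s⁻¹) * z.re)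
      = (s⁻¹ * s⁻¹) * (Real.tan α * z.re) by ring] at h2
    exact (mul_le_mul_iff_right₀ hc).mp h2

/-- Conjugation identity for quadratic forms with a Hermitian `R`. -/
lemma quad_conj {n : ℕ} (R M : Matrix (Fin n) (Fin n) ℂ) (hR : Rᴴ = R) (v : Fin n → ℂ) :
    star (R *ᵥ v) ⬝ᵥ M *ᵥ (R *ᵥ v) = star v ⬝ᵥ (R * M * R) *ᵥ v := by
  rw [star_mulVec, hR, mulVec_mulVec, ← dotProduct_mulVec, mulVec_mulVec, mul_assoc]

open scoped MatrixOrder in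
/-- Core inequality: for a sector matrix `A`, `det (Re A)` is a positive real and
`|det A| ≤ secⁿ α · det (Re A)`. -/
lemma sector_det_bound {n : ℕ} {α : ℝ} (hα : α ∈ Set.Ico 0 (Real.pi / 2))
    {A : Matrix (Fin n) (Fin n) ℂ} (hA : InSector α A) :
    0 < (matRe A).det.re ∧
      ‖A.det‖ ≤ (Real.cos α)⁻¹ ^ n * (matRe A).det.re := by
  obtain ⟨hα0, hα2⟩ := hα
  have hcos : 0 < Real.cos α :=
    Real.cos_pos_of_mem_Ioo ⟨by linarith [Real.pi_pos], hα2⟩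
  set H : Matrix (Fin n) (Fin n) ℂ := matRe A with hH
  set K : Matrix (Fin n) (Fin n) ℂ := ((-Complex.I) * 2⁻¹) • (A - Aᴴ) with hK
  have hconj : ∀ x : Fin n → ℂ, star x ⬝ᵥ Aᴴ *ᵥ x = star (star x ⬝ᵥ A *ᵥ x) := by
    intro x
    rw [star_dotProduct, star_mulVec, conjTranspose_conjTranspose, ← dotProduct_mulVec]
  have hHq : ∀ x : Fin n → ℂ, star x ⬝ᵥ H *ᵥ x = (((star x ⬝ᵥ A *ᵥ x).re : ℝ) : ℂ) := by
    intro x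
    rw [hH]
    simp only [matRe, smul_mulVec, dotProduct_smul, add_mulVec, dotProduct_add,
      smul_eq_mul, hconj x]
    rw [show star (star x ⬝ᵥ A *ᵥ x) = starRingEnd ℂ (star x ⬝ᵥ A *ᵥ x) from rfl,
      Complex.add_conj]
    push_cast
    ring
  have hKq : ∀ x : Fin n → ℂ, star x ⬝ᵥ K *ᵥ x = (((star x ⬝ᵥ A *ᵥ x).im : ℝ) : ℂ) := by
    intro x
    rw [hK]
    simp only [smul_mulVec, dotProduct_smul, sub_mulVec, dotProduct_sub,
      smul_eq_mul, hconj x]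
    rw [show star (star x ⬝ᵥ A *ᵥ x) = starRingEnd ℂ (star x ⬝ᵥ A *ᵥ x) from rfl,
      Complex.sub_conj]
    push_cast
    rw [show (-Complex.I * 2⁻¹) * (2 * (star x ⬝ᵥ A *ᵥ x).im * Complex.I)
      = -(Complex.I * Complex.I) * (star x ⬝ᵥ A *ᵥ x).im by ring, Complex.I_mul_I]
    ring
  have hHerm : H.IsHermitian := by
    show Hᴴ = H
    rw [hH]
    simp only [matRe, conjTranspose_smul, conjTranspose_add, conjTranspose_conjTranspose]
    rw [show star (2⁻¹ : ℂ) = (2⁻¹ : ℂ) by simp, add_comm]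
  have hKHerm : Kᴴ = K := by
    rw [hK]
    ext i j
    simp only [conjTranspose_apply, Matrix.smul_apply, Matrix.sub_apply, smul_eq_mul,
      star_mul', star_sub, star_star, Complex.star_def, _root_.map_mul, map_neg,
      Complex.conj_I, map_inv₀, map_ofNat, Complex.conj_conj]
    ring
  have hAHK : A = H + Complex.I • K := by
    rw [hH, hK]
    ext i j
    simp only [matRe, Matrix.add_apply, Matrix.smul_apply, Matrix.sub_apply, smul_eq_mul]
    linear_combination ((A i j - Aᴴ i j) / 2) * Complex.I_sq
  -- positive definiteness of H
  have hHpos : H.PosDef := by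
    refine Matrix.PosDef.of_dotProduct_mulVec_pos hHerm fun x hx => ?_
    rw [hHq x]
    exact_mod_cast (sector_quad hA x hx).1
  have hdetpos : 0 < H.det := hHpos.det_pos
  rw [Complex.lt_def] at hdetpos
  have hdre : 0 < H.det.re := by simpa using hdetpos.1
  have hdim : H.det.im = 0 := by simpa using hdetpos.2.symm
  have hdetH : H.det = ((H.det.re : ℝ) : ℂ) := by apply Complex.ext <;> simp [hdim]
  refine ⟨hdre, ?_⟩
  -- square root of H
  have hPS : H.PosSemidef := hHpos.posSemidef
  set T : Matrix (Fin n) (Fin n) ℂ := CFC.sqrt H with hT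
  have hTmul : T * T = H := CFC.sqrt_mul_sqrt_self H hPS.nonneg
  have hTH : T.IsHermitian := (CFC.sqrt_nonneg H).posSemidef.1
  have hTT : T.det * T.det = H.det := by rw [← det_mul, hTmul]
  have hTdet : IsUnit T.det := by
    refine isUnit_iff_ne_zero.mpr fun h => ?_
    rw [h, mul_zero] at hTT
    exact hdre.ne' (by rw [← hTT]; simp)
  set R : Matrix (Fin n) (Fin n) ℂ := T⁻¹ with hR
  have hTR : T * R = 1 := mul_nonsing_inv T hTdet
  have hRT : R * T = 1 := nonsing_inv_mul T hTdet
  have hRH : Rᴴ = R := by rw [hR, conjTranspose_nonsing_inv, hTH.eq]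
  set S : Matrix (Fin n) (Fin n) ℂ := R * K * R with hSdef
  have hS : S.IsHermitian := by
    show Sᴴ = S
    rw [hSdef, conjTranspose_mul, conjTranspose_mul, hRH, hKHerm, mul_assoc]
  -- factorization
  have hTST : T * S * T = K := by
    rw [hSdef, ← mul_assoc T (R * K) R, ← mul_assoc T R K, mul_assoc (T * R * K) R T,
      hTR, hRT, one_mul, mul_one]
  have hfact : A = T * (1 + Complex.I • S) * T := by
    rw [show T * (1 + Complex.I • S) * T = T * T + Complex.I • (T * S * T) by
      rw [mul_add, add_mul, mul_one, Matrix.mul_smul, Matrix.smul_mul], hTST, hTmul, ← hAHK]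
  have hdetA : A.det = H.det * (1 + Complex.I • S).det := by
    rw [hfact, det_mul, det_mul]
    linear_combination (1 + Complex.I • S).det * hTT
  -- eigenvalue bound
  have hRHR : R * H * R = 1 := by
    rw [← hTmul, show R * (T * T) * R = (R * T) * (T * R) by noncomm_ring, hRT, hTR, one_mul]
  have hev : ∀ j, |hS.eigenvalues j| ≤ Real.tan α := by
    intro j
    set v : Fin n → ℂ := ⇑(hS.eigenvectorBasis j) with hv
    set y : Fin n → ℂ := R *ᵥ v with hy
    have hvv : star v ⬝ᵥ v = 1 := by
      have h1 : (inner ℂ (hS.eigenvectorBasis j) (hS.eigenvectorBasis j) : ℂ) = 1 := by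
        rw [inner_self_eq_norm_sq_to_K, hS.eigenvectorBasis.orthonormal.1 j]
        norm_num
      rw [← h1, EuclideanSpace.inner_eq_star_dotProduct, dotProduct_comm]
    have hyH : star y ⬝ᵥ H *ᵥ y = 1 := by
      rw [hy, quad_conj R H hRH v, hRHR, one_mulVec, hvv]
    have hyK : star v ⬝ᵥ S *ᵥ v = star y ⬝ᵥ K *ᵥ y := by
      rw [hy, quad_conj R K hRH v, hSdef]
    set z := star y ⬝ᵥ A *ᵥ y with hz
    have hzre : z.re = 1 := by
      have := hHq y
      rw [hyH] at this
      exact_mod_cast this.symm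
    have hy0 : y ≠ 0 := by
      intro h
      rw [hz, h] at hzre
      simp at hzre
    have hlam : hS.eigenvalues j = z.im := by
      have h1 := hS.eigenvalues_eq j
      have h2 : star v ⬝ᵥ S *ᵥ v = ((z.im : ℝ) : ℂ) := by rw [hyK, hKq y]
      rw [h1]
      rw [show (dotProduct (star ⇑(hS.eigenvectorBasis j))
        (S *ᵥ ⇑(hS.eigenvectorBasis j))) = star v ⬝ᵥ S *ᵥ v from rfl, h2]
      simp
    have := (sector_quad hA y hy0).2
    rw [← hz, hzre, mul_one] at this
    rw [hlam]
    exact this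
  -- determinant of 1 + I•S via spectral theorem
  set U : Matrix (Fin n) (Fin n) ℂ := (hS.eigenvectorUnitary : Matrix (Fin n) (Fin n) ℂ)
    with hU
  have hUU : U * star U = 1 := mem_unitaryGroup_iff.mp hS.eigenvectorUnitary.2
  set D : Matrix (Fin n) (Fin n) ℂ := diagonal (RCLike.ofReal ∘ hS.eigenvalues) with hD
  have hspec : S = U * D * star U := hS.spectral_theorem
  have hfac2 : 1 + Complex.I • S = U * (1 + Complex.I • D) * star U := by
    rw [mul_add, add_mul, mul_one, Matrix.mul_smul, Matrix.smul_mul, hUU, ← hspec]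
  have hdetU : U.det * (star U).det = 1 := by rw [← det_mul, hUU, det_one]
  have hdet1S : (1 + Complex.I • S).det = (1 + Complex.I • D).det := by
    rw [hfac2, det_mul, det_mul]
    linear_combination (1 + Complex.I • D).det * hdetU
  have hdetD : (1 + Complex.I • D).det
      = ∏ j, (1 + Complex.I * ((hS.eigenvalues j : ℝ) : ℂ)) := by
    rw [hD]
    rw [show (1 : Matrix (Fin n) (Fin n) ℂ) = diagonal (fun _ => (1:ℂ)) by
      rw [diagonal_one]]
    rw [show Complex.I • diagonal (RCLike.ofReal ∘ hS.eigenvalues : Fin n → ℂ)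
      = diagonal (fun j => Complex.I * ((hS.eigenvalues j : ℝ) : ℂ)) by
        rw [← diagonal_smul]; congr 1]
    rw [diagonal_add, det_diagonal]
  have habs1 : ∀ j, ‖(1 + Complex.I * ((hS.eigenvalues j : ℝ) : ℂ))‖
      ≤ (Real.cos α)⁻¹ := by
    intro j
    set l := hS.eigenvalues j with hl
    have hsq : ‖(1 + Complex.I * (l : ℂ))‖ ^ 2 = 1 + l ^ 2 := by
      rw [Complex.sq_norm, Complex.normSq_apply]
      simp
      ring
    have htan : |l| ≤ Real.tan α := hev j
    have hsec : (0:ℝ) < (Real.cos α)⁻¹ := by positivity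
    have hid : 1 + Real.tan α ^ 2 = ((Real.cos α)⁻¹) ^ 2 := by
      have := Real.inv_one_add_tan_sq hcos.ne'
      field_simp at this ⊢
      linarith [this]
    have h0 : 0 ≤ ‖(1 + Complex.I * (l : ℂ))‖ := norm_nonneg _
    have htan0 : 0 ≤ Real.tan α := by
      rw [Real.tan_eq_sin_div_cos]
      exact div_nonneg (Real.sin_nonneg_of_nonneg_of_le_pi hα0 (by linarith [Real.pi_pos])) hcos.le
    nlinarith [sq_nonneg (‖(1 + Complex.I * (l : ℂ))‖ - (Real.cos α)⁻¹),
      sq_abs l, abs_nonneg l]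
  have habs : ‖(1 + Complex.I • S).det‖ ≤ (Real.cos α)⁻¹ ^ n := by
    rw [hdet1S, hdetD, norm_prod]
    calc ∏ j, ‖(1 + Complex.I * ((hS.eigenvalues j : ℝ) : ℂ))‖
        ≤ ∏ _j : Fin n, (Real.cos α)⁻¹ :=
          Finset.prod_le_prod (fun j _ => norm_nonneg _) (fun j _ => habs1 j)
      _ = (Real.cos α)⁻¹ ^ n := by
          rw [Finset.prod_const, Finset.card_univ, Fintype.card_fin]
  have habsH : ‖H.det‖ = H.det.re := by
    conv_lhs => rw [hdetH]
    rw [Complex.norm_real, Real.norm_eq_abs, abs_of_pos hdre]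
  have hdetabs : ‖A.det‖ = H.det.re * ‖(1 + Complex.I • S).det‖ := by
    rw [hdetA, norm_mul, habsH]
  rw [hdetabs]
  calc H.det.re * ‖(1 + Complex.I • S).det‖
      ≤ H.det.re * ((Real.cos α)⁻¹ ^ n) := by
        exact mul_le_mul_of_nonneg_left habs hdre.le
    _ = (Real.cos α)⁻¹ ^ n * H.det.re := by ring

/-- For sector matrices `A, B` of angle `α ∈ [0, π/2)`, the harmonic mean of `|det A|`
and `|det B|` is at most `secⁿ(α)` times the harmonic mean of `det(Re A)` and `det(Re B)`. -/
theorem stmt6 {n : ℕ} {α : ℝ} (hα : α ∈ Set.Ico 0 (Real.pi / 2))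
    {A B : Matrix (Fin n) (Fin n) ℂ} (hA : InSector α A) (hB : InSector α B) :
    2 * ‖A.det‖ * ‖B.det‖ / (‖A.det‖ + ‖B.det‖) ≤
      (Real.cos α)⁻¹ ^ n *
        (2 * (matRe A).det.re * (matRe B).det.re / ((matRe A).det.re + (matRe B).det.re)) := by
  obtain ⟨hp, hap⟩ := sector_det_bound hα hA
  obtain ⟨hq, hbq⟩ := sector_det_bound hα hB
  set a := ‖A.det‖ with ha
  set b := ‖B.det‖ with hb
  set p := (matRe A).det.re with hpd
  set q := (matRe B).det.re with hqd
  have hcos : 0 < Real.cos α := by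
    obtain ⟨hα0, hα2⟩ := hα
    exact Real.cos_pos_of_mem_Ioo ⟨by linarith [Real.pi_pos], hα2⟩
  set c : ℝ := (Real.cos α)⁻¹ ^ n with hc
  have hc0 : 0 < c := by positivity
  have ha0 : 0 ≤ a := norm_nonneg _
  have hb0 : 0 ≤ b := norm_nonneg _
  have hP : 0 < c * p := by positivity
  have hQ : 0 < c * q := by positivity
  have key : 2 * a * b / (a + b) ≤ 2 * (c * p) * (c * q) / (c * p + c * q) := by
    rcases eq_or_lt_of_le (add_nonneg ha0 hb0) with h | h
    · rw [← h]
      simp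
      positivity
    · rw [div_le_div_iff₀ h (by positivity)]
      nlinarith [mul_nonneg (mul_nonneg ha0 hP.le) (sub_nonneg.mpr hbq),
        mul_nonneg (mul_nonneg hb0 hQ.le) (sub_nonneg.mpr hap)]
  refine key.trans (le_of_eq ?_)
  have hpq : p + q ≠ 0 := by positivity
  have hc' : c ≠ 0 := hc0.ne'
  field_simp
end

section
/- Let α ∈ [0, π/2) and let A, B ∈ M_n(ℂ) be sector matrices of angle α. Then |det((A+B)^{-1})| ≤ (sec^{3n}(α)/4^{n}) · |det(I_n + A^{-1})| · |det(I_n + B^{-1})|. -/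
open Matrix
open scoped ComplexOrder

section helpers
variable {n : ℕ}

lemma conj_form (M : Matrix (Fin n) (Fin n) ℂ) (x : Fin n → ℂ) :
    star x ⬝ᵥ Mᴴ *ᵥ x = star (star x ⬝ᵥ M *ᵥ x) := by
  simp only [dotProduct, mulVec, conjTranspose_apply, star_sum, star_mul', star_star,
    Finset.mul_sum]
  rw [Finset.sum_comm]
  refine Finset.sum_congr rfl fun i _ => Finset.sum_congr rfl fun j _ => by simp only [Pi.star_apply, star_star]; ring

lemma matRe_isHermitian (M : Matrix (Fin n) (Fin n) ℂ) : (matRe M).IsHermitian := by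
  unfold matRe
  rw [IsHermitian, conjTranspose_smul, conjTranspose_add, conjTranspose_conjTranspose]
  norm_num [add_comm]

lemma re_form (M : Matrix (Fin n) (Fin n) ℂ) (x : Fin n → ℂ) :
    star x ⬝ᵥ (matRe M) *ᵥ x = (((star x ⬝ᵥ M *ᵥ x).re : ℝ) : ℂ) := by
  unfold matRe
  rw [smul_mulVec, add_mulVec, dotProduct_smul, dotProduct_add, conj_form]
  set q := star x ⬝ᵥ M *ᵥ x
  rw [Complex.star_def, Complex.add_conj]
  push_cast
  rw [smul_eq_mul]
  ring

lemma dot_self_eq (x : Fin n → ℂ) :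
    star x ⬝ᵥ x = ((∑ i, Complex.normSq (x i) : ℝ) : ℂ) := by
  simp [dotProduct, Complex.normSq_eq_conj_mul_self]

lemma sector_general {α : ℝ} {M : Matrix (Fin n) (Fin n) ℂ} (hM : InSector α M)
    {x : Fin n → ℂ} (hx : x ≠ 0) :
    0 < (star x ⬝ᵥ M *ᵥ x).re ∧
      |(star x ⬝ᵥ M *ᵥ x).im| ≤ Real.tan α * (star x ⬝ᵥ M *ᵥ x).re := by
  set c : ℝ := ∑ i, Complex.normSq (x i) with hc
  have hcpos : 0 < c := by
    have h1 : ∀ i, 0 ≤ Complex.normSq (x i) := fun i => Complex.normSq_nonneg _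
    rcases Function.ne_iff.mp hx with ⟨i, hi⟩
    exact Finset.sum_pos' (fun i _ => h1 i) ⟨i, Finset.mem_univ i, Complex.normSq_pos.mpr hi⟩
  set r : ℝ := (Real.sqrt c)⁻¹ with hr
  have hrpos : 0 < r := by positivity
  set u : Fin n → ℂ := (r : ℂ) • x with hu
  have huu : star u ⬝ᵥ u = 1 := by
    rw [hu, star_smul, smul_dotProduct, dotProduct_smul, dot_self_eq, ← hc]
    rw [Complex.star_def, Complex.conj_ofReal, smul_eq_mul, smul_eq_mul]
    rw [← Complex.ofReal_mul, ← Complex.ofReal_mul, hr,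
      show (Real.sqrt c)⁻¹ * ((Real.sqrt c)⁻¹ * c) = c / (Real.sqrt c)^2 by ring,
      Real.sq_sqrt hcpos.le, div_self hcpos.ne']
    norm_num
  have hq : star u ⬝ᵥ M *ᵥ u = ((r^2 : ℝ) : ℂ) * (star x ⬝ᵥ M *ᵥ x) := by
    rw [hu, star_smul, smul_dotProduct, mulVec_smul, dotProduct_smul]
    rw [Complex.star_def, Complex.conj_ofReal, smul_eq_mul, smul_eq_mul]
    push_cast
    ring
  obtain ⟨h1, h2⟩ := hM u huu
  rw [hq] at h1 h2
  set q := star x ⬝ᵥ M *ᵥ x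
  have hre : (((r^2 : ℝ) : ℂ) * q).re = r^2 * q.re := by
    simp [Complex.mul_re, ← Complex.ofReal_pow]
  have him : (((r^2 : ℝ) : ℂ) * q).im = r^2 * q.im := by
    simp [Complex.mul_im, ← Complex.ofReal_pow]
  rw [hre] at h1 h2
  rw [him] at h2
  have hr2 : 0 < r^2 := by positivity
  constructor
  · nlinarith
  · rw [abs_mul, abs_of_pos hr2] at h2
    calc |q.im| = (r^2)⁻¹ * (r^2 * |q.im|) := by field_simp
    _ ≤ (r^2)⁻¹ * (Real.tan α * (r^2 * q.re)) := by
        apply mul_le_mul_of_nonneg_left h2 (by positivity)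
    _ = Real.tan α * q.re := by field_simp

lemma matRe_posDef {α : ℝ} {M : Matrix (Fin n) (Fin n) ℂ} (hM : InSector α M) :
    (matRe M).PosDef := by
  refine Matrix.PosDef.of_dotProduct_mulVec_pos (matRe_isHermitian M) fun x hx => ?_
  rw [re_form]
  rw [Complex.zero_lt_real]
  exact (sector_general hM hx).1

end helpers
section spectral
variable {n : ℕ}

lemma unit_eigenvector {X : Matrix (Fin n) (Fin n) ℂ} (hX : X.IsHermitian) (i : Fin n) :
    star ((WithLp.equiv 2 _) (hX.eigenvectorBasis i)) ⬝ᵥ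
      (WithLp.equiv 2 _) (hX.eigenvectorBasis i) = 1 := by
  have h := hX.eigenvectorBasis.orthonormal.1 i
  show star (WithLp.ofLp (hX.eigenvectorBasis i)) ⬝ᵥ WithLp.ofLp (hX.eigenvectorBasis i) = 1
  rw [dotProduct_comm, ← EuclideanSpace.inner_eq_star_dotProduct]
  rw [inner_self_eq_norm_sq_to_K, h]
  norm_num

lemma eigenvalue_bound {X : Matrix (Fin n) (Fin n) ℂ} (hX : X.IsHermitian)
    (p : ℝ → Prop)
    (h : ∀ x : Fin n → ℂ, star x ⬝ᵥ x = 1 → p ((star x ⬝ᵥ X *ᵥ x).re)) (i : Fin n) :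
    p (hX.eigenvalues i) := by
  rw [hX.eigenvalues_eq]
  exact h _ (unit_eigenvector hX i)

lemma det_one_add_eig {R : Matrix (Fin n) (Fin n) ℂ} (hR : R.IsHermitian) :
    det (1 + R) = ((∏ i, (1 + hR.eigenvalues i) : ℝ) : ℂ) := by
  set U : Matrix (Fin n) (Fin n) ℂ := (hR.eigenvectorUnitary : Matrix (Fin n) (Fin n) ℂ)
  have hU1 : U * star U = 1 := mem_unitaryGroup_iff.mp hR.eigenvectorUnitary.2
  have hU1' : star U * U = 1 := mem_unitaryGroup_iff'.mp hR.eigenvectorUnitary.2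
  have hkey : 1 + R = U * diagonal (fun i => (1 : ℂ) + hR.eigenvalues i) * star U := by
    have hd : diagonal (fun i => (1 : ℂ) + hR.eigenvalues i)
        = 1 + diagonal (RCLike.ofReal ∘ hR.eigenvalues) := by
      rw [← diagonal_one, diagonal_add]
      rfl
    rw [hd, mul_add, add_mul, mul_one, hU1]
    conv_lhs => rw [hR.spectral_theorem, Unitary.conjStarAlgAut_apply]
  rw [hkey, det_mul, det_mul, mul_comm, ← mul_assoc, ← det_mul, hU1', det_one, one_mul,
    det_diagonal]
  push_cast
  rfl

lemma det_one_add_sq_eig {S : Matrix (Fin n) (Fin n) ℂ} (hS : S.IsHermitian) :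
    det (1 + S * S) = ((∏ i, (1 + hS.eigenvalues i ^ 2) : ℝ) : ℂ) := by
  set U : Matrix (Fin n) (Fin n) ℂ := (hS.eigenvectorUnitary : Matrix (Fin n) (Fin n) ℂ)
  have hU1 : U * star U = 1 := mem_unitaryGroup_iff.mp hS.eigenvectorUnitary.2
  have hU1' : star U * U = 1 := mem_unitaryGroup_iff'.mp hS.eigenvectorUnitary.2
  have hSS : S * S = U * diagonal ((fun x : ℝ => (x:ℂ)^2) ∘ hS.eigenvalues) * star U := by
    have hmul : ∀ D : Matrix (Fin n) (Fin n) ℂ, U * D * star U * (U * D * star U)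
        = U * (D * (star U * U) * D) * star U := by intros; noncomm_ring
    conv_lhs => rw [hS.spectral_theorem, Unitary.conjStarAlgAut_apply]
    have hfun : ((fun x : ℝ => (x:ℂ)^2) ∘ hS.eigenvalues)
        = (RCLike.ofReal ∘ hS.eigenvalues) * (RCLike.ofReal ∘ hS.eigenvalues) := by
      funext i; simp [pow_two]
    rw [hmul, hU1', mul_one, diagonal_mul_diagonal, hfun]
    rfl
  have hkey : 1 + S * S = U * diagonal (fun i => (1 : ℂ) + hS.eigenvalues i ^ 2) * star U := by
    have hd : diagonal (fun i => (1 : ℂ) + hS.eigenvalues i ^ 2)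
        = 1 + diagonal ((fun x : ℝ => (x:ℂ)^2) ∘ hS.eigenvalues) := by
      rw [← diagonal_one, diagonal_add]
      rfl
    rw [hd, mul_add, add_mul, mul_one, hU1, ← hSS]
  rw [hkey, det_mul, det_mul, mul_comm, ← mul_assoc, ← det_mul, hU1', det_one, one_mul,
    det_diagonal]
  push_cast
  rfl

set_option maxHeartbeats 1000000 in
lemma WPW_eq_one {P W : Matrix (Fin n) (Fin n) ℂ} (hP : P.PosDef)
    (hWW : W * W = P⁻¹) : W * P * W = 1 := by
  have hdP : IsUnit P.det := isUnit_iff_ne_zero.mpr (ne_of_gt hP.det_pos)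
  have hPP : P * P⁻¹ = 1 := mul_nonsing_inv P hdP
  have hXX : (W * P * W) * (W * P * W) = W * P * W := by
    calc (W * P * W) * (W * P * W) = W * (P * ((W * W) * (P * W))) := by
          simp only [mul_assoc]
    _ = W * (P * (P⁻¹ * (P * W))) := by rw [hWW]
    _ = W * ((P * P⁻¹) * (P * W)) := by simp only [mul_assoc]
    _ = W * (P * W) := by rw [hPP, one_mul]
    _ = W * P * W := by simp only [mul_assoc]
  have hdet : (W * P * W).det = 1 := by
    rw [det_mul, det_mul]
    have h2 : W.det * W.det = P.det⁻¹ := by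
      rw [← det_mul, hWW, det_nonsing_inv, Ring.inverse_eq_inv']
    rw [mul_comm, ← mul_assoc, h2, inv_mul_cancel₀ (IsUnit.ne_zero hdP)]
  have hu : IsUnit (W * P * W) := (isUnit_iff_isUnit_det _).mpr (by rw [hdet]; exact isUnit_one)
  exact hu.mul_left_cancel (by rw [mul_one]; exact hXX)

end spectral
section amgm
variable {n : ℕ}

lemma det_posdef_re {P : Matrix (Fin n) (Fin n) ℂ} (hP : P.PosDef) :
    P.det = ((P.det.re : ℝ) : ℂ) ∧ 0 < P.det.re := by
  have h := hP.det_pos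
  rw [Complex.lt_def] at h
  obtain ⟨h1, h2⟩ := h
  simp only [Complex.zero_re, Complex.zero_im] at h1 h2
  exact ⟨Complex.ext (by simp) (by simp [← h2]), h1⟩

lemma prod_one_add_ge {f : Fin n → ℝ} (hf : ∀ i, 0 ≤ f i) :
    2 ^ n * Real.sqrt (∏ i, f i) ≤ ∏ i, (1 + f i) := by
  have hsq : Real.sqrt (∏ i, f i) = ∏ i, Real.sqrt (f i) := by
    rw [show (∏ i, f i) = (∏ i, Real.sqrt (f i))^2 by
      rw [← Finset.prod_pow]
      exact Finset.prod_congr rfl fun i _ => (Real.sq_sqrt (hf i)).symm]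
    exact Real.sqrt_sq (Finset.prod_nonneg fun i _ => Real.sqrt_nonneg _)
  rw [hsq]
  calc 2 ^ n * ∏ i, Real.sqrt (f i) = ∏ i : Fin n, (2 * Real.sqrt (f i)) := by
        rw [Finset.prod_mul_distrib, Finset.prod_const, Finset.card_univ, Fintype.card_fin]
  _ ≤ ∏ i, (1 + f i) := by
      apply Finset.prod_le_prod (fun i _ => by positivity) fun i _ => ?_
      nlinarith [sq_nonneg (1 - Real.sqrt (f i)), Real.sq_sqrt (hf i), Real.sqrt_nonneg (f i)]

open scoped MatrixOrder in
set_option maxHeartbeats 1000000 in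
lemma amgm_det {P Q : Matrix (Fin n) (Fin n) ℂ} (hP : P.PosDef) (hQ : Q.PosDef) :
    2 ^ n * Real.sqrt (P.det.re * Q.det.re) ≤ (P + Q).det.re := by
  obtain ⟨haeq, hapos⟩ := det_posdef_re hP
  obtain ⟨hbeq, hbpos⟩ := det_posdef_re hQ
  set a := P.det.re
  set b := Q.det.re
  have hPinv : (P⁻¹).PosDef := hP.inv
  set W : Matrix (Fin n) (Fin n) ℂ := CFC.sqrt (P⁻¹) with hWdef
  have hWH : W.IsHermitian := (Matrix.nonneg_iff_posSemidef.mp (CFC.sqrt_nonneg (P⁻¹))).1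
  have hWW : W * W = P⁻¹ :=
    CFC.sqrt_mul_sqrt_self _ (Matrix.nonneg_iff_posSemidef.mpr hPinv.posSemidef)
  have hWPW : W * P * W = 1 := WPW_eq_one hP hWW
  set R := W * Q * W with hRdef
  have hRpsd : R.PosSemidef := by
    have := hQ.posSemidef.conjTranspose_mul_mul_same W
    rwa [hWH] at this
  have heignn : ∀ i, 0 ≤ hRpsd.1.eigenvalues i := hRpsd.eigenvalues_nonneg
  have hdW : W.det * W.det = ((a : ℝ) : ℂ)⁻¹ := by
    rw [← det_mul, hWW, det_nonsing_inv, Ring.inverse_eq_inv', haeq]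
  have hdetR : R.det = ((a⁻¹ * b : ℝ) : ℂ) := by
    rw [hRdef, det_mul, det_mul, mul_comm, ← mul_assoc, hdW, hbeq]
    push_cast
    ring
  have hprodeig : (∏ i, hRpsd.1.eigenvalues i) = a⁻¹ * b := by
    have h1 := hRpsd.1.det_eq_prod_eigenvalues
    rw [hdetR] at h1
    have : ((a⁻¹ * b : ℝ) : ℂ) = ((∏ i, hRpsd.1.eigenvalues i : ℝ) : ℂ) := by
      rw [h1, Complex.ofReal_prod]
      rfl
    exact (Complex.ofReal_inj.mp this).symm
  have hsum : W * (P + Q) * W = 1 + R := by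
    rw [mul_add, add_mul, hWPW]
  have hdetPQ : (P + Q).det = ((a : ℝ) : ℂ) * (1 + R).det := by
    have h1 : W.det * (P + Q).det * W.det = (1 + R).det := by
      rw [← det_mul, ← det_mul, ← hsum]
    have h2 : (((a : ℝ) : ℂ))⁻¹ * (P + Q).det = (1 + R).det := by
      rw [← hdW, ← h1]; ring
    have ha0 : ((a : ℝ) : ℂ) ≠ 0 := by
      simpa using hapos.ne'
    field_simp at h2
    rw [h2]
  have hone : (1 + R).det = ((∏ i, (1 + hRpsd.1.eigenvalues i) : ℝ) : ℂ) :=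
    det_one_add_eig hRpsd.1
  have hre : (P + Q).det.re = a * ∏ i, (1 + hRpsd.1.eigenvalues i) := by
    rw [hdetPQ, hone, ← Complex.ofReal_mul, Complex.ofReal_re]
  rw [hre]
  calc 2 ^ n * Real.sqrt (a * b)
      = a * (2 ^ n * Real.sqrt (a⁻¹ * b)) := by
        rw [show a * (2 ^ n * Real.sqrt (a⁻¹ * b)) = 2 ^ n * (a * Real.sqrt (a⁻¹ * b)) by ring]
        congr 1
        rw [show a * Real.sqrt (a⁻¹ * b) = Real.sqrt (a^2) * Real.sqrt (a⁻¹ * b) by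
          rw [Real.sqrt_sq hapos.le],
          ← Real.sqrt_mul (by positivity)]
        congr 1
        field_simp
  _ ≤ a * ∏ i, (1 + hRpsd.1.eigenvalues i) := by
        apply mul_le_mul_of_nonneg_left _ hapos.le
        rw [← hprodeig]
        exact prod_one_add_ge heignn

end amgm
section sector
variable {n : ℕ} {α : ℝ}

open scoped MatrixOrder in
set_option maxHeartbeats 1600000 in
lemma sector_det_bounds (hα : α ∈ Set.Ico 0 (Real.pi / 2))
    {M : Matrix (Fin n) (Fin n) ℂ} (hM : InSector α M) :
    (matRe M).det.re ≤ ‖M.det‖ ∧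
      ‖M.det‖ ≤ (Real.cos α)⁻¹ ^ n * (matRe M).det.re := by
  obtain ⟨hα0, hα2⟩ := hα
  have hcos : 0 < Real.cos α := Real.cos_pos_of_mem_Ioo ⟨by linarith [Real.pi_pos], hα2⟩
  set t := Real.tan α with ht
  have hH : (matRe M).PosDef := matRe_posDef hM
  obtain ⟨hdeq, hdpos⟩ := det_posdef_re hH
  set h := (matRe M).det.re
  have hHinv : ((matRe M)⁻¹).PosDef := hH.inv
  set W : Matrix (Fin n) (Fin n) ℂ := CFC.sqrt ((matRe M)⁻¹) with hWdef
  have hWH : W.IsHermitian := (Matrix.nonneg_iff_posSemidef.mp (CFC.sqrt_nonneg ((matRe M)⁻¹))).1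
  have hWW : W * W = (matRe M)⁻¹ :=
    CFC.sqrt_mul_sqrt_self _ (Matrix.nonneg_iff_posSemidef.mpr hHinv.posSemidef)
  have hWHW : W * (matRe M) * W = 1 := WPW_eq_one hH hWW
  have hdW : W.det * W.det = ((h : ℝ) : ℂ)⁻¹ := by
    rw [← det_mul, hWW, det_nonsing_inv, Ring.inverse_eq_inv', hdeq]
  have hdWne : W.det ≠ 0 := by
    intro h0
    rw [h0, mul_zero] at hdW
    exact (inv_ne_zero (by simpa using hdpos.ne')) hdW.symm
  set C := W * M * W with hCdef
  -- matRe C = 1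
  have hCH : Cᴴ = W * Mᴴ * W := by
    rw [hCdef, conjTranspose_mul, conjTranspose_mul, hWH, mul_assoc]
  have hReC : matRe C = 1 := by
    have h1 : matRe C = W * matRe M * W := by
      simp only [matRe, hCdef, hCH, mul_add, add_mul, smul_add, mul_smul_comm, smul_mul_assoc,
        conjTranspose_mul, hWH.eq, Matrix.mul_assoc]
    rw [h1, hWHW]
  -- C-hermitian-part identities
  have hC2 : C + Cᴴ = (2 : ℂ) • 1 := by
    have h2 := congrArg (fun X => (2 : ℂ) • X) hReC
    simpa [matRe, smul_smul] using h2
  have hCH2 : Cᴴ = (2 : ℂ) • 1 - C := eq_sub_of_add_eq' hC2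
  set D := C - 1 with hDdef
  have hDH : Dᴴ = -D := by
    rw [hDdef, conjTranspose_sub, conjTranspose_one, hCH2, two_smul]
    abel
  set S := (-Complex.I) • D with hSdef
  have hSH : S.IsHermitian := by
    rw [IsHermitian, hSdef, conjTranspose_smul, hDH]
    simp [Complex.star_def]
  -- quadratic form of C at unit vectors
  have hformC : ∀ x : Fin n → ℂ, star x ⬝ᵥ x = 1 →
      (star x ⬝ᵥ C *ᵥ x).re = 1 ∧ |(star x ⬝ᵥ C *ᵥ x).im| ≤ t := by
    intro x hx
    have hre := re_form C x
    rw [hReC, one_mulVec, hx] at hre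
    have hre1 : (star x ⬝ᵥ C *ᵥ x).re = 1 := by
      have := congrArg Complex.re hre.symm
      simpa using this
    refine ⟨hre1, ?_⟩
    -- rewrite as quadratic form of M at y = W x
    have hy : star x ⬝ᵥ C *ᵥ x = star (W *ᵥ x) ⬝ᵥ M *ᵥ (W *ᵥ x) := by
      rw [hCdef, ← mulVec_mulVec, ← mulVec_mulVec, dotProduct_mulVec, star_mulVec, hWH]
    have hyne : W *ᵥ x ≠ 0 := by
      intro h0
      rw [hy, h0] at hre1
      simp at hre1
    have := (sector_general hM hyne).2
    rw [← hy] at this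
    calc |(star x ⬝ᵥ C *ᵥ x).im| ≤ t * (star x ⬝ᵥ C *ᵥ x).re := this
    _ = t := by rw [hre1, mul_one]
  -- quadratic form of S
  have hformS : ∀ x : Fin n → ℂ, star x ⬝ᵥ x = 1 →
      |(star x ⬝ᵥ S *ᵥ x).re| ≤ t := by
    intro x hx
    obtain ⟨h1, h2⟩ := hformC x hx
    have hq : star x ⬝ᵥ S *ᵥ x = (-Complex.I) * (star x ⬝ᵥ C *ᵥ x - 1) := by
      rw [hSdef, hDdef, smul_mulVec, dotProduct_smul, sub_mulVec, one_mulVec,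
        dotProduct_sub, hx]
      simp [smul_eq_mul]
    rw [hq]
    have : ((-Complex.I) * (star x ⬝ᵥ C *ᵥ x - 1)).re = (star x ⬝ᵥ C *ᵥ x).im := by
      simp [Complex.mul_re, h1]
    rw [this]
    exact h2
  -- eigenvalue bounds for S
  have heig : ∀ i, |hSH.eigenvalues i| ≤ t :=
    eigenvalue_bound hSH (fun r => |r| ≤ t) hformS
  -- |det C|^2 = ∏ (1 + eig^2)
  have hSS : S * S = -(D * D) := by
    rw [hSdef, smul_mul_assoc, mul_smul_comm, smul_smul]
    simp
  have hCCH : C * Cᴴ = 1 + S * S := by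
    have hC1 : C = 1 + D := by rw [hDdef]; abel
    have hCH1 : Cᴴ = 1 - D := by
      rw [hCH2, hDdef, two_smul]; abel
    rw [hCH1, hC1, hSS]
    noncomm_ring
  have hnormSq : Complex.normSq C.det = ∏ i, (1 + hSH.eigenvalues i ^ 2) := by
    have h1 : (C * Cᴴ).det = ((Complex.normSq C.det : ℝ) : ℂ) := by
      rw [det_mul, det_conjTranspose, Complex.star_def, Complex.mul_conj]
    have h2 := det_one_add_sq_eig hSH
    rw [hCCH, h2] at h1
    exact (Complex.ofReal_inj.mp h1).symm
  -- bounds on the product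
  have hsec : 1 + t ^ 2 = ((Real.cos α)⁻¹) ^ 2 := by
    have h1 := Real.inv_one_add_tan_sq hcos.ne'
    rw [← ht] at h1
    rw [inv_pow, ← h1, inv_inv]
  have hprod_lb : (1 : ℝ) ≤ ∏ i, (1 + hSH.eigenvalues i ^ 2) := by
    have := Finset.prod_le_prod (f := fun _ : Fin n => (1:ℝ))
      (g := fun i => 1 + hSH.eigenvalues i ^ 2) (s := Finset.univ)
      (fun i _ => zero_le_one)
      (fun i _ => by nlinarith [sq_nonneg (hSH.eigenvalues i)])
    simpa using this
  have hprod_ub : ∏ i, (1 + hSH.eigenvalues i ^ 2) ≤ ((Real.cos α)⁻¹ ^ 2) ^ n := by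
    calc ∏ i, (1 + hSH.eigenvalues i ^ 2) ≤ ∏ _i : Fin n, (1 + t ^ 2) := by
          apply Finset.prod_le_prod (fun i _ => by positivity) fun i _ => ?_
          have := heig i
          have h2 : hSH.eigenvalues i ^ 2 ≤ t ^ 2 := by
            rw [← sq_abs]
            apply pow_le_pow_left₀ (abs_nonneg _) this
          linarith
    _ = (1 + t ^ 2) ^ n := by rw [Finset.prod_const, Finset.card_univ, Fintype.card_fin]
    _ = ((Real.cos α)⁻¹ ^ 2) ^ n := by rw [hsec]
  -- |det C| bounds
  have habsC : ‖C.det‖ = Real.sqrt (∏ i, (1 + hSH.eigenvalues i ^ 2)) := by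
    rw [Complex.norm_def, hnormSq]
  have habsC_lb : 1 ≤ ‖C.det‖ := by
    rw [habsC]
    calc (1:ℝ) = Real.sqrt 1 := by rw [Real.sqrt_one]
    _ ≤ _ := Real.sqrt_le_sqrt hprod_lb
  have habsC_ub : ‖C.det‖ ≤ (Real.cos α)⁻¹ ^ n := by
    rw [habsC]
    calc Real.sqrt (∏ i, (1 + hSH.eigenvalues i ^ 2))
        ≤ Real.sqrt (((Real.cos α)⁻¹ ^ 2) ^ n) := Real.sqrt_le_sqrt hprod_ub
    _ = (Real.cos α)⁻¹ ^ n := by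
        rw [← pow_mul, mul_comm 2 n, pow_mul, Real.sqrt_sq (by positivity)]
  -- relate det M and det C
  have hdetM : ‖M.det‖ = h * ‖C.det‖ := by
    have h1 : C.det = (((h : ℝ) : ℂ))⁻¹ * M.det := by
      rw [hCdef, det_mul, det_mul, mul_comm, ← mul_assoc, hdW]
    have h2 : M.det = ((h : ℝ) : ℂ) * C.det := by
      rw [h1, ← mul_assoc, mul_inv_cancel₀ (by simpa using hdpos.ne'), one_mul]
    rw [h2, norm_mul]
    congr 1
    simpa using abs_of_pos hdpos
  constructor
  · rw [hdetM]
    nlinarith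
  · rw [hdetM]
    calc h * ‖C.det‖ ≤ h * (Real.cos α)⁻¹ ^ n := by
          apply mul_le_mul_of_nonneg_left habsC_ub hdpos.le
    _ = (Real.cos α)⁻¹ ^ n * h := mul_comm _ _

end sector
section closure
variable {n : ℕ} {α : ℝ}

lemma matRe_add (A B : Matrix (Fin n) (Fin n) ℂ) :
    matRe (A + B) = matRe A + matRe B := by
  unfold matRe
  rw [conjTranspose_add]
  module

lemma matRe_one : matRe (1 : Matrix (Fin n) (Fin n) ℂ) = 1 := by
  unfold matRe
  rw [conjTranspose_one, ← two_smul ℂ (1 : Matrix (Fin n) (Fin n) ℂ), smul_smul]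
  norm_num

lemma sector_add {A B : Matrix (Fin n) (Fin n) ℂ} (hA : InSector α A) (hB : InSector α B) :
    InSector α (A + B) := by
  intro x hx
  obtain ⟨ha1, ha2⟩ := hA x hx
  obtain ⟨hb1, hb2⟩ := hB x hx
  have hq : star x ⬝ᵥ (A + B) *ᵥ x = star x ⬝ᵥ A *ᵥ x + star x ⬝ᵥ B *ᵥ x := by
    rw [add_mulVec, dotProduct_add]
  rw [hq]
  constructor
  · simp only [Complex.add_re]; linarith
  · simp only [Complex.add_re, Complex.add_im]
    calc |(star x ⬝ᵥ A *ᵥ x).im + (star x ⬝ᵥ B *ᵥ x).im|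
        ≤ |(star x ⬝ᵥ A *ᵥ x).im| + |(star x ⬝ᵥ B *ᵥ x).im| := abs_add_le _ _
    _ ≤ _ := by rw [mul_add]; exact add_le_add ha2 hb2

lemma sector_one (hα : α ∈ Set.Ico 0 (Real.pi / 2)) :
    InSector α (1 : Matrix (Fin n) (Fin n) ℂ) := by
  intro x hx
  rw [one_mulVec, hx]
  norm_num
  exact Real.tan_nonneg_of_nonneg_of_le_pi_div_two hα.1 hα.2.le

end closure

set_option maxHeartbeats 1600000 in
/-- For sector matrices `A, B` of angle `α ∈ [0, π/2)`,
`|det((A+B)⁻¹)| ≤ (sec^{3n}(α)/4ⁿ)|det(I + A⁻¹)||det(I + B⁻¹)|`. -/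
theorem stmt8 {n : ℕ} {α : ℝ} (hα : α ∈ Set.Ico 0 (Real.pi / 2))
    {A B : Matrix (Fin n) (Fin n) ℂ} (hA : InSector α A) (hB : InSector α B) :
    ‖((A + B)⁻¹).det‖ ≤
      (Real.cos α)⁻¹ ^ (3 * n) / 4 ^ n *
        (‖(1 + A⁻¹).det‖ * ‖(1 + B⁻¹).det‖) := by
  have hcos : 0 < Real.cos α :=
    Real.cos_pos_of_mem_Ioo ⟨by linarith [Real.pi_pos, hα.1], hα.2⟩
  set s := (Real.cos α)⁻¹ with hs
  have hspos : 0 < s := by positivity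
  have hs1 : 1 ≤ s := by
    rw [hs]
    rw [le_inv_comm₀ one_pos hcos]
    simpa using Real.cos_le_one α
  have hAH := matRe_posDef hA
  have hBH := matRe_posDef hB
  obtain ⟨haeq, hapos⟩ := det_posdef_re hAH
  obtain ⟨hbeq, hbpos⟩ := det_posdef_re hBH
  set a := (matRe A).det.re
  set b := (matRe B).det.re
  set u := Real.sqrt a with hu
  set v := Real.sqrt b with hv
  have hupos : 0 < u := Real.sqrt_pos.mpr hapos
  have hvpos : 0 < v := Real.sqrt_pos.mpr hbpos
  have hu2 : u ^ 2 = a := Real.sq_sqrt hapos.le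
  have hv2 : v ^ 2 = b := Real.sq_sqrt hbpos.le
  -- bounds for |det A| and |det B|
  obtain ⟨hdA_lb, hdA_ub⟩ := sector_det_bounds hα hA
  obtain ⟨hdB_lb, hdB_ub⟩ := sector_det_bounds hα hB
  have hdApos : 0 < ‖A.det‖ := lt_of_lt_of_le hapos hdA_lb
  have hdBpos : 0 < ‖B.det‖ := lt_of_lt_of_le hbpos hdB_lb
  have hdetAne : A.det ≠ 0 := by
    intro h0; rw [h0] at hdApos; simp at hdApos
  have hdetBne : B.det ≠ 0 := by
    intro h0; rw [h0] at hdBpos; simp at hdBpos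
  -- lower bound for |det(A+B)|
  have hAB := sector_add hA hB
  have hABlb : 2 ^ n * (u * v) ≤ ‖(A + B).det‖ := by
    have h1 := (sector_det_bounds hα hAB).1
    rw [matRe_add] at h1
    have h2 := amgm_det hAH hBH
    calc 2 ^ n * (u * v) = 2 ^ n * Real.sqrt (a * b) := by
          rw [hu, hv, ← Real.sqrt_mul hapos.le]
    _ ≤ (matRe A + matRe B).det.re := h2
    _ ≤ ‖(A + B).det‖ := h1
  have hABpos : 0 < ‖(A + B).det‖ := lt_of_lt_of_le (by positivity) hABlb
  have hdetABne : (A + B).det ≠ 0 := by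
    intro h0; rw [h0] at hABpos; simp at hABpos
  -- lower bounds for |det(A+1)|, |det(B+1)|
  have hA1 : InSector α (A + 1) := sector_add hA (sector_one hα)
  have hB1 : InSector α (B + 1) := sector_add hB (sector_one hα)
  have he1 : 2 ^ n * u ≤ ‖(A + 1).det‖ := by
    have h1 := (sector_det_bounds hα hA1).1
    rw [matRe_add, matRe_one] at h1
    have h2 := amgm_det (Matrix.PosDef.one (R := ℂ) (n := Fin n)) hAH
    rw [det_one] at h2
    simp only [Complex.one_re, one_mul] at h2
    calc 2 ^ n * u = 2 ^ n * Real.sqrt a := by rw [hu]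
    _ ≤ ((1 : Matrix (Fin n) (Fin n) ℂ) + matRe A).det.re := h2
    _ = ((matRe A) + 1).det.re := by rw [add_comm]
    _ ≤ _ := h1
  have he2 : 2 ^ n * v ≤ ‖(B + 1).det‖ := by
    have h1 := (sector_det_bounds hα hB1).1
    rw [matRe_add, matRe_one] at h1
    have h2 := amgm_det (Matrix.PosDef.one (R := ℂ) (n := Fin n)) hBH
    rw [det_one] at h2
    simp only [Complex.one_re, one_mul] at h2
    calc 2 ^ n * v = 2 ^ n * Real.sqrt b := by rw [hv]
    _ ≤ ((1 : Matrix (Fin n) (Fin n) ℂ) + matRe B).det.re := h2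
    _ = ((matRe B) + 1).det.re := by rw [add_comm]
    _ ≤ _ := h1
  -- rewrite the goal
  have hgoal1 : ‖((A + B)⁻¹).det‖ = (‖(A + B).det‖)⁻¹ := by
    rw [det_nonsing_inv, Ring.inverse_eq_inv', norm_inv]
  have hAinv : (1 : Matrix (Fin n) (Fin n) ℂ) + A⁻¹ = A⁻¹ * (A + 1) := by
    rw [mul_add, nonsing_inv_mul A (isUnit_iff_ne_zero.mpr hdetAne), mul_one]
  have hBinv : (1 : Matrix (Fin n) (Fin n) ℂ) + B⁻¹ = B⁻¹ * (B + 1) := by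
    rw [mul_add, nonsing_inv_mul B (isUnit_iff_ne_zero.mpr hdetBne), mul_one]
  have hgoal2 : ‖(1 + A⁻¹).det‖
      = (‖A.det‖)⁻¹ * ‖(A + 1).det‖ := by
    rw [hAinv, det_mul, norm_mul, det_nonsing_inv, Ring.inverse_eq_inv', norm_inv]
  have hgoal3 : ‖(1 + B⁻¹).det‖
      = (‖B.det‖)⁻¹ * ‖(B + 1).det‖ := by
    rw [hBinv, det_mul, norm_mul, det_nonsing_inv, Ring.inverse_eq_inv', norm_inv]
  rw [hgoal1, hgoal2, hgoal3]
  -- final arithmetic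
  have hdA_ub' : ‖A.det‖ ≤ s ^ n * u ^ 2 := by rw [hu2]; exact hdA_ub
  have hdB_ub' : ‖B.det‖ ≤ s ^ n * v ^ 2 := by rw [hv2]; exact hdB_ub
  have h2n : (1:ℝ) ≤ 2 ^ n := one_le_pow₀ one_le_two
  have hsn : (1:ℝ) ≤ s ^ n := one_le_pow₀ hs1
  calc (‖(A + B).det‖)⁻¹
      ≤ (2 ^ n * (u * v))⁻¹ := by
        apply inv_anti₀ (by positivity) hABlb
  _ ≤ s ^ (3 * n) / 4 ^ n *
        (((s ^ n * u ^ 2)⁻¹ * (2 ^ n * u)) * ((s ^ n * v ^ 2)⁻¹ * (2 ^ n * v))) := by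
      have hmid : s ^ (3 * n) / 4 ^ n *
          (((s ^ n * u ^ 2)⁻¹ * (2 ^ n * u)) * ((s ^ n * v ^ 2)⁻¹ * (2 ^ n * v)))
          = s ^ n / (u * v) := by
        have h4 : (4:ℝ) ^ n = 2 ^ n * 2 ^ n := by
          rw [show (4:ℝ) = 2 * 2 by norm_num, mul_pow]
        have h3 : s ^ (3 * n) = s ^ n * (s ^ n * s ^ n) := by
          rw [show 3 * n = n + (n + n) by ring, pow_add, pow_add]
        rw [h4, h3]
        field_simp
      rw [hmid, inv_eq_one_div, div_le_div_iff₀ (by positivity) (by positivity)]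
      have h12 : (1:ℝ) ≤ s ^ n * 2 ^ n := one_le_mul_of_one_le_of_one_le hsn h2n
      nlinarith [mul_nonneg (sub_nonneg.mpr h12) (mul_pos hupos hvpos).le]
  _ ≤ _ := by
      gcongr
end

section
/- Let X, Y ∈ M_n(ℂ) be positive definite matrices satisfying m·X ≤ Y ≤ M·X in the Loewner order for some 0 < m ≤ M, and let κ = max{K(m)², K(M)²}. Then (X + Y)/2 ≤ κ · ((X^{-1} + Y^{-1})/2)^{-1}, i.e., the arithmetic mean of X and Y is at most κ times their harmonic mean, in the Loewner order. -/
open Matrix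
open scoped ComplexOrder

/-- The Kantorovich constant `K(x) = (x+1)²/(4x)`. -/
noncomputable def kant (x : ℝ) : ℝ := (x + 1) ^ 2 / (4 * x)

/-! ### Auxiliary scalar lemmas -/

lemma kant_scalar_bound {m M t : ℝ} (hm : 0 < m) (hmM : m ≤ M) (h1 : m ≤ t) (h2 : t ≤ M) :
    (1 + t) ^ 2 ≤ 4 * max (kant m ^ 2) (kant M ^ 2) * t := by
  have ht : 0 < t := lt_of_lt_of_le hm h1
  have hM : 0 < M := lt_of_lt_of_le hm hmM
  have hkm : 1 ≤ kant m := by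
    rw [kant, le_div_iff₀ (by positivity)]; nlinarith [sq_nonneg (m - 1)]
  have hkM : 1 ≤ kant M := by
    rw [kant, le_div_iff₀ (by positivity)]; nlinarith [sq_nonneg (M - 1)]
  have hmm : (m + 1) ^ 2 = 4 * m * kant m := by rw [kant]; field_simp
  have hMM : (M + 1) ^ 2 = 4 * M * kant M := by rw [kant]; field_simp
  rcases le_total t 1 with h | h
  · have hκ : kant m ≤ max (kant m ^ 2) (kant M ^ 2) :=
      le_trans (by nlinarith : kant m ≤ kant m ^ 2) (le_max_left _ _)
    -- m (1+t)² ≤ (m+1)² t  since (t-m)(1-mt) ≥ 0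
    have key : m * (1 + t) ^ 2 ≤ (m + 1) ^ 2 * t := by
      nlinarith [mul_nonneg (sub_nonneg.2 h1) (sub_nonneg.2 (by nlinarith : m * t ≤ 1))]
    have : m * (1 + t) ^ 2 ≤ m * (4 * kant m * t) := by nlinarith
    have h3 : (1 + t) ^ 2 ≤ 4 * kant m * t := le_of_mul_le_mul_left this hm
    nlinarith
  · have hκ : kant M ≤ max (kant m ^ 2) (kant M ^ 2) :=
      le_trans (by nlinarith : kant M ≤ kant M ^ 2) (le_max_right _ _)
    have key : M * (1 + t) ^ 2 ≤ (M + 1) ^ 2 * t := by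
      nlinarith [mul_nonneg (sub_nonneg.2 h2) (sub_nonneg.2 (by nlinarith : 1 ≤ M * t))]
    have : M * (1 + t) ^ 2 ≤ M * (4 * kant M * t) := by nlinarith
    have h3 : (1 + t) ^ 2 ≤ 4 * kant M * t := le_of_mul_le_mul_left this hM
    nlinarith

/-! ### Auxiliary matrix lemmas about conjugation by a unitary -/

section conj

variable {n : ℕ} {U : Matrix (Fin n) (Fin n) ℂ}

lemma conj_diag_mul (hU : star U * U = 1) (v w : Fin n → ℂ) :
    (U * diagonal v * star U) * (U * diagonal w * star U) = U * diagonal (v * w) * star U := by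
  have h : star U * (U * (diagonal w * star U)) = diagonal w * star U := by
    rw [← Matrix.mul_assoc, hU, Matrix.one_mul]
  calc (U * diagonal v * star U) * (U * diagonal w * star U)
      = U * (diagonal v * (star U * (U * (diagonal w * star U)))) := by
        simp only [Matrix.mul_assoc]
    _ = U * (diagonal v * (diagonal w * star U)) := by rw [h]
    _ = U * diagonal (v * w) * star U := by
        rw [← Matrix.mul_assoc (diagonal v), diagonal_mul_diagonal, ← Matrix.mul_assoc]
        rfl

lemma conj_diag_one (hU' : U * star U = 1) :
    U * diagonal (1 : Fin n → ℂ) * star U = 1 := by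
  have h1 : diagonal (1 : Fin n → ℂ) = (1 : Matrix (Fin n) (Fin n) ℂ) := diagonal_one
  rw [h1, Matrix.mul_one, hU']

lemma conj_diag_inv (hU : star U * U = 1) (hU' : U * star U = 1)
    (w : Fin n → ℂ) (hw : ∀ i, w i ≠ 0) :
    (U * diagonal w * star U)⁻¹ = U * diagonal w⁻¹ * star U := by
  apply inv_eq_left_inv
  rw [conj_diag_mul hU]
  have h : w⁻¹ * w = 1 := by funext i; exact inv_mul_cancel₀ (hw i)
  rw [h, conj_diag_one hU']

lemma conj_diag_add (v w : Fin n → ℂ) :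
    U * diagonal v * star U + U * diagonal w * star U = U * diagonal (v + w) * star U := by
  rw [← Matrix.add_mul, ← Matrix.mul_add,
    show diagonal (v + w) = diagonal v + diagonal w from (diagonal_add v w).symm]

lemma conj_diag_smul (c : ℂ) (w : Fin n → ℂ) :
    c • (U * diagonal w * star U) = U * diagonal (c • w) * star U := by
  rw [show diagonal (c • w) = c • diagonal w from diagonal_smul c w,
    Matrix.mul_smul, Matrix.smul_mul]

lemma conj_diag_sub (v w : Fin n → ℂ) :
    U * diagonal v * star U - U * diagonal w * star U = U * diagonal (v - w) * star U := by
  rw [← Matrix.sub_mul, ← Matrix.mul_sub,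
    show diagonal (v - w) = diagonal v - diagonal w from (diagonal_sub v w).symm]

lemma conj_diag_posSemidef (w : Fin n → ℂ) (hw : ∀ i, 0 ≤ w i) :
    (U * diagonal w * star U).PosSemidef := by
  simpa [star_eq_conjTranspose] using
    (posSemidef_diagonal_iff.mpr hw).mul_mul_conjTranspose_same U

end conj

/-- Real scalar multiplication of a complex matrix is complex scalar multiplication by the
coercion. -/
lemma real_smul_matrix {n : ℕ} (r : ℝ) (A : Matrix (Fin n) (Fin n) ℂ) :
    r • A = (r : ℂ) • A := by
  ext i j
  simp [Matrix.smul_apply, Complex.real_smul]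

/-- For positive definite `X, Y` with `m·X ≤ Y ≤ M·X` (`0 < m ≤ M`) and
`κ = max{K(m)², K(M)²}`, the arithmetic mean of `X` and `Y` is at most `κ` times their
harmonic mean: `(X+Y)/2 ≤ κ·((X⁻¹+Y⁻¹)/2)⁻¹` in the Loewner order. -/
theorem stmt11 {n : ℕ} {X Y : Matrix (Fin n) (Fin n) ℂ}
    (hX : X.PosDef) (hY : Y.PosDef) {m M : ℝ} (hm : 0 < m) (hmM : m ≤ M)
    (h1 : (Y - m • X).PosSemidef) (h2 : (M • X - Y).PosSemidef) :
    (max (kant m ^ 2) (kant M ^ 2) • ((2⁻¹ : ℝ) • (X⁻¹ + Y⁻¹))⁻¹ -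
      (2⁻¹ : ℝ) • (X + Y)).PosSemidef := by
  classical
  set κ : ℝ := max (kant m ^ 2) (kant M ^ 2) with hκdef
  -- the square root of X
  have hXps : X.PosSemidef := hX.posSemidef
  open MatrixOrder in
  set S : Matrix (Fin n) (Fin n) ℂ := CFC.sqrt X with hSdef
  have hSps : S.PosSemidef := by open MatrixOrder in exact (CFC.sqrt_nonneg X).posSemidef
  have hSH : S.IsHermitian := hSps.1
  have hSS : S * S = X := by open MatrixOrder in exact CFC.sqrt_mul_sqrt_self X hXps.nonneg
  have hdet : IsUnit S.det := by
    have hd : S.det * S.det = X.det := by rw [← det_mul, hSS]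
    have hX0 : X.det ≠ 0 := hX.det_pos.ne'
    refine isUnit_iff_ne_zero.2 fun h => hX0 ?_
    rw [← hd, h, mul_zero]
  have hSC : S * S⁻¹ = 1 := mul_nonsing_inv S hdet
  have hCS : S⁻¹ * S = 1 := nonsing_inv_mul S hdet
  set C : Matrix (Fin n) (Fin n) ℂ := S⁻¹ with hCdef
  have hCH : C.IsHermitian := hSH.inv
  have hCinv : C⁻¹ = S := nonsing_inv_nonsing_inv S hdet
  -- Z = C Y C
  set Z : Matrix (Fin n) (Fin n) ℂ := C * Y * C with hZdef
  have hZH : Z.IsHermitian := by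
    show Zᴴ = Z
    rw [hZdef, conjTranspose_mul, conjTranspose_mul, hCH.eq, hY.isHermitian.eq,
      Matrix.mul_assoc]
  have hCXC : C * X * C = 1 := by
    rw [← hSS, ← Matrix.mul_assoc, Matrix.mul_assoc (C * S), hSC, Matrix.mul_one,
      hCS]
  -- Loewner bounds on Z
  have hZm : (Z - (m : ℂ) • 1).PosSemidef := by
    have h := h1.mul_mul_conjTranspose_same C
    have e : C * (Y - m • X) * Cᴴ = Z - (m : ℂ) • 1 := by
      rw [hCH.eq, real_smul_matrix, Matrix.mul_sub, Matrix.sub_mul, Matrix.mul_smul,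
        Matrix.smul_mul, hCXC, hZdef]
    rwa [e] at h
  have hZM : ((M : ℂ) • 1 - Z).PosSemidef := by
    have h := h2.mul_mul_conjTranspose_same C
    have e : C * (M • X - Y) * Cᴴ = (M : ℂ) • 1 - Z := by
      rw [hCH.eq, real_smul_matrix, Matrix.mul_sub, Matrix.sub_mul, Matrix.mul_smul,
        Matrix.smul_mul, hCXC, hZdef]
    rwa [e] at h
  -- eigenvalue bounds
  set ev : Fin n → ℝ := hZH.eigenvalues with hevdef
  have hev : ∀ i, m ≤ ev i ∧ ev i ≤ M := by
    intro i
    set v : Fin n → ℂ := ⇑(hZH.eigenvectorBasis i) with hvdef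
    have hvv : star v ⬝ᵥ v = 1 := by
      have h := EuclideanSpace.inner_eq_star_dotProduct (𝕜 := ℂ)
        (hZH.eigenvectorBasis i) (hZH.eigenvectorBasis i)
      rw [inner_self_eq_norm_sq_to_K, hZH.eigenvectorBasis.orthonormal.1 i] at h
      rw [dotProduct_comm]
      simpa using h.symm
    have hZv : Z *ᵥ v = (ev i : ℂ) • v := by
      have h := hZH.mulVec_eigenvectorBasis i
      rw [RCLike.real_smul_eq_coe_smul (K := ℂ)] at h
      exact h
    constructor
    · have h := hZm.dotProduct_mulVec_nonneg v
      have e : star v ⬝ᵥ (Z - (m : ℂ) • 1) *ᵥ v = ((ev i - m : ℝ) : ℂ) := by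
        rw [Matrix.sub_mulVec, Matrix.smul_mulVec, Matrix.one_mulVec, hZv,
          dotProduct_sub, dotProduct_smul, dotProduct_smul, hvv]
        simp only [smul_eq_mul, mul_one]
        push_cast
        try ring
      rw [e, Complex.zero_le_real] at h
      linarith
    · have h := hZM.dotProduct_mulVec_nonneg v
      have e : star v ⬝ᵥ ((M : ℂ) • 1 - Z) *ᵥ v = ((M - ev i : ℝ) : ℂ) := by
        rw [Matrix.sub_mulVec, Matrix.smul_mulVec, Matrix.one_mulVec, hZv,
          dotProduct_sub, dotProduct_smul, dotProduct_smul, hvv]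
        simp only [smul_eq_mul, mul_one]
        push_cast
        try ring
      rw [e, Complex.zero_le_real] at h
      linarith
  have hev_pos : ∀ i, 0 < ev i := fun i => lt_of_lt_of_le hm (hev i).1
  -- spectral decomposition
  set U : Matrix (Fin n) (Fin n) ℂ := (hZH.eigenvectorUnitary : Matrix (Fin n) (Fin n) ℂ)
    with hUdef
  have hU : star U * U = 1 := mem_unitaryGroup_iff'.mp hZH.eigenvectorUnitary.2
  have hU' : U * star U = 1 := mem_unitaryGroup_iff.mp hZH.eigenvectorUnitary.2
  set d : Fin n → ℂ := fun i => ((ev i : ℝ) : ℂ) with hddef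
  have hZspec : Z = U * diagonal d * star U := hZH.spectral_theorem
  have hone : (1 : Matrix (Fin n) (Fin n) ℂ) = U * diagonal 1 * star U :=
    (conj_diag_one hU').symm
  have hd0 : ∀ i, d i ≠ 0 := fun i => by
    simp only [hddef, ne_eq, Complex.ofReal_eq_zero]
    exact (hev_pos i).ne'
  have hZinv : Z⁻¹ = U * diagonal d⁻¹ * star U := by
    rw [hZspec, conj_diag_inv hU hU' d hd0]
  -- the middle matrix W = 2⁻¹ • (1 + Z⁻¹)
  set w1 : Fin n → ℂ := fun i => (2⁻¹ : ℂ) * (1 + (d i)⁻¹) with hw1def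
  have hWspec : (2⁻¹ : ℂ) • ((1 : Matrix (Fin n) (Fin n) ℂ) + Z⁻¹)
      = U * diagonal w1 * star U := by
    rw [hZinv, hone, conj_diag_add, conj_diag_smul]
    congr 1
  have hw10 : ∀ i, w1 i ≠ 0 := by
    intro i
    have h0 : (0:ℝ) < 2⁻¹ * (1 + (ev i)⁻¹) := by
      have := hev_pos i; positivity
    simp only [hw1def, hddef]
    intro h
    rw [show ((2⁻¹ : ℂ) * (1 + (((ev i : ℝ)) : ℂ)⁻¹)) = ((2⁻¹ * (1 + (ev i)⁻¹) : ℝ) : ℂ) by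
      push_cast; ring] at h
    exact absurd (Complex.ofReal_eq_zero.mp h) h0.ne'
  have hWinv : ((2⁻¹ : ℂ) • ((1 : Matrix (Fin n) (Fin n) ℂ) + Z⁻¹))⁻¹
      = U * diagonal w1⁻¹ * star U := by
    rw [hWspec, conj_diag_inv hU hU' w1 hw10]
  -- algebraic identities relating X, Y to S and Z
  have hXinv : X⁻¹ = C * C := by rw [← hSS, Matrix.mul_inv_rev]
  have hYZ : Y = S * Z * S := by
    rw [hZdef, ← Matrix.mul_assoc, ← Matrix.mul_assoc, hSC, Matrix.one_mul,
      Matrix.mul_assoc, hCS, Matrix.mul_one]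
  have hYinv : Y⁻¹ = C * Z⁻¹ * C := by
    rw [hYZ, Matrix.mul_inv_rev, Matrix.mul_inv_rev, Matrix.mul_assoc]
  have hsum : (2⁻¹ : ℂ) • (X⁻¹ + Y⁻¹)
      = C * ((2⁻¹ : ℂ) • ((1 : Matrix (Fin n) (Fin n) ℂ) + Z⁻¹)) * C := by
    rw [hXinv, hYinv, Matrix.mul_smul, Matrix.smul_mul]
    congr 1
    rw [Matrix.mul_add, Matrix.add_mul, Matrix.mul_one]
  have hsuminv : ((2⁻¹ : ℂ) • (X⁻¹ + Y⁻¹))⁻¹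
      = S * ((2⁻¹ : ℂ) • ((1 : Matrix (Fin n) (Fin n) ℂ) + Z⁻¹))⁻¹ * S := by
    rw [hsum, Matrix.mul_inv_rev, Matrix.mul_inv_rev, hCinv, Matrix.mul_assoc]
  have hXY : (2⁻¹ : ℂ) • (X + Y)
      = S * ((2⁻¹ : ℂ) • ((1 : Matrix (Fin n) (Fin n) ℂ) + Z)) * S := by
    rw [← hSS, hYZ, Matrix.mul_smul, Matrix.smul_mul]
    congr 1
    rw [Matrix.mul_add, Matrix.add_mul, Matrix.mul_one]
  -- the final inner diagonal vector
  set wf : Fin n → ℂ := fun i => (κ : ℂ) * (w1 i)⁻¹ - (2⁻¹ : ℂ) * (1 + d i) with hwfdef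
  have hDspec : (κ : ℂ) • ((2⁻¹ : ℂ) • ((1 : Matrix (Fin n) (Fin n) ℂ) + Z⁻¹))⁻¹
      - (2⁻¹ : ℂ) • ((1 : Matrix (Fin n) (Fin n) ℂ) + Z)
      = U * diagonal wf * star U := by
    rw [hWinv, conj_diag_smul, hZspec, hone, conj_diag_add, conj_diag_smul, conj_diag_sub]
    congr 1
  have hwf : ∀ i, 0 ≤ wf i := by
    intro i
    have ht := hev_pos i
    have hcast : wf i = ((κ * (2⁻¹ * (1 + (ev i)⁻¹))⁻¹ - 2⁻¹ * (1 + ev i) : ℝ) : ℂ) := by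
      simp only [hwfdef, hw1def, hddef]
      push_cast
      ring
    rw [hcast, Complex.zero_le_real]
    have hb := kant_scalar_bound hm hmM (hev i).1 (hev i).2
    rw [← hκdef] at hb
    have e : (2⁻¹ * (1 + (ev i)⁻¹))⁻¹ = 2 * ev i / (1 + ev i) := by
      rw [show (2⁻¹ * (1 + (ev i)⁻¹) : ℝ) = (1 + ev i) / (2 * ev i) by
        field_simp
        ring, inv_div]
    rw [sub_nonneg, e, ← mul_div_assoc, le_div_iff₀ (by positivity)]
    nlinarith
  -- assemble
  have key : (κ : ℂ) • ((2⁻¹ : ℂ) • (X⁻¹ + Y⁻¹))⁻¹ - (2⁻¹ : ℂ) • (X + Y)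
      = S * (U * diagonal wf * star U) * S := by
    rw [← hDspec, hsuminv, hXY]
    simp only [Matrix.mul_sub, Matrix.sub_mul, Matrix.mul_smul, Matrix.smul_mul,
      Matrix.mul_assoc]
  have hpsd : (S * (U * diagonal wf * star U) * Sᴴ).PosSemidef :=
    (conj_diag_posSemidef wf hwf).mul_mul_conjTranspose_same S
  rw [hSH.eq] at hpsd
  rw [real_smul_matrix κ, real_smul_matrix (2⁻¹ : ℝ) (X⁻¹ + Y⁻¹),
    real_smul_matrix (2⁻¹ : ℝ) (X + Y),
    show ((2⁻¹ : ℝ) : ℂ) = (2⁻¹ : ℂ) by norm_num, key]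
  exact hpsd
end

section
/- Let α ∈ [0, π/2), let A ∈ M_n(ℂ) be a sector matrix of angle α with 0 < m·I_n ≤ Re A ≤ M·I_n for some 0 < m ≤ M, and set h = M/m. Then for every normalized positive linear map Φ : M_n(ℂ) → M_l(ℂ), one has (Φ((Re A)^{-1}))² ≤ sec⁴(α)·K(h)·(Φ(Re(A^{-1})))² in the Loewner order. -/
open Matrix
open scoped ComplexOrder

open scoped MatrixOrder in
/-- square root of a PSD matrix (replacement for the removed Mathlib definition). -/
noncomputable def Matrix.PosSemidef.sqrt {k : ℕ} {P : Matrix (Fin k) (Fin k) ℂ}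
    (_hP : P.PosSemidef) : Matrix (Fin k) (Fin k) ℂ :=
  CFC.sqrt P

open scoped MatrixOrder in
lemma Matrix.PosSemidef.sqrt_mul_self {k : ℕ} {P : Matrix (Fin k) (Fin k) ℂ}
    (hP : P.PosSemidef) : hP.sqrt * hP.sqrt = P :=
  CFC.sqrt_mul_sqrt_self P hP.nonneg

open scoped MatrixOrder in
lemma Matrix.PosSemidef.posSemidef_sqrt {k : ℕ} {P : Matrix (Fin k) (Fin k) ℂ}
    (hP : P.PosSemidef) : hP.sqrt.PosSemidef :=
  (CFC.sqrt_nonneg P).posSemidef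

namespace SectorProof

variable {n : ℕ}

/-- The imaginary (Hermitian) part. -/
noncomputable def matIm (A : Matrix (Fin n) (Fin n) ℂ) : Matrix (Fin n) (Fin n) ℂ :=
  (-(2⁻¹) * Complex.I) • (A - Aᴴ)

lemma realSmul {k : ℕ} (r : ℝ) (B : Matrix (Fin k) (Fin k) ℂ) : r • B = (r : ℂ) • B := by
  ext i j
  simp [Complex.real_smul]

lemma matRe_herm (A : Matrix (Fin n) (Fin n) ℂ) : (matRe A).IsHermitian := by
  show _ = _
  ext i j
  simp [matRe, conjTranspose_apply, mul_comm, mul_add]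
  ring

lemma matIm_herm (A : Matrix (Fin n) (Fin n) ℂ) : (matIm A).IsHermitian := by
  show _ = _
  ext i j
  simp [matIm, conjTranspose_apply]
  ring

lemma re_add_I_im (A : Matrix (Fin n) (Fin n) ℂ) :
    matRe A + Complex.I • matIm A = A := by
  ext i j
  simp only [matRe, matIm, Matrix.add_apply, Matrix.smul_apply, Matrix.sub_apply,
    Matrix.conjTranspose_apply, smul_eq_mul]
  linear_combination (-(2⁻¹ : ℂ) * (A i j - star (A j i))) * Complex.I_mul_I

lemma conjT_eq (A : Matrix (Fin n) (Fin n) ℂ) :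
    Aᴴ = matRe A - Complex.I • matIm A := by
  ext i j
  simp only [matRe, matIm, Matrix.sub_apply, Matrix.smul_apply, Matrix.add_apply,
    Matrix.conjTranspose_apply, smul_eq_mul]
  linear_combination ((2⁻¹ : ℂ) * (star (A j i) - A i j)) * Complex.I_mul_I

lemma smul_psd {k : ℕ} {r : ℝ} (hr : 0 ≤ r) {B : Matrix (Fin k) (Fin k) ℂ}
    (hB : B.PosSemidef) : ((r : ℂ) • B).PosSemidef := by
  refine Matrix.PosSemidef.of_dotProduct_mulVec_nonneg ?_ ?_
  · show _ = _
    rw [conjTranspose_smul, hB.isHermitian.eq]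
    congr 1
    simp [Complex.star_def, Complex.conj_ofReal]
  · intro x
    rw [smul_mulVec, dotProduct_smul, smul_eq_mul]
    exact mul_nonneg (Complex.zero_le_real.mpr hr) (hB.dotProduct_mulVec_nonneg x)

lemma dot_conj (A : Matrix (Fin n) (Fin n) ℂ) (x : Fin n → ℂ) :
    star (star x ⬝ᵥ A *ᵥ x) = star x ⬝ᵥ Aᴴ *ᵥ x := by
  rw [← star_dotProduct, star_mulVec, ← dotProduct_mulVec]

lemma herm_dot_im {H : Matrix (Fin n) (Fin n) ℂ} (hH : H.IsHermitian) (x : Fin n → ℂ) :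
    (star x ⬝ᵥ H *ᵥ x).im = 0 := by
  have h := dot_conj H x
  rw [hH.eq] at h
  have h2 := congrArg Complex.im h
  simp only [Complex.star_def, Complex.conj_im] at h2
  linarith

lemma psd_of_forms {H : Matrix (Fin n) (Fin n) ℂ} (hH : H.IsHermitian)
    (h : ∀ x, 0 ≤ (star x ⬝ᵥ H *ᵥ x).re) : H.PosSemidef :=
  Matrix.PosSemidef.of_dotProduct_mulVec_nonneg hH fun x => Complex.nonneg_iff.mpr ⟨h x, (herm_dot_im hH x).symm⟩

lemma form_decomp (A : Matrix (Fin n) (Fin n) ℂ) (x : Fin n → ℂ) :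
    star x ⬝ᵥ A *ᵥ x
      = star x ⬝ᵥ matRe A *ᵥ x + Complex.I * (star x ⬝ᵥ matIm A *ᵥ x) := by
  conv_lhs => rw [← re_add_I_im A]
  rw [add_mulVec, dotProduct_add, smul_mulVec, dotProduct_smul, smul_eq_mul]

lemma sector_bound {α : ℝ} {A : Matrix (Fin n) (Fin n) ℂ} (hA : InSector α A)
    (x : Fin n → ℂ) :
    |(star x ⬝ᵥ matIm A *ᵥ x).re| ≤ Real.tan α * (star x ⬝ᵥ matRe A *ᵥ x).re := by
  rcases eq_or_ne x 0 with rfl | hx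
  · simp
  · set d : ℂ := star x ⬝ᵥ x with hd
    have hd0 : 0 ≤ d := dotProduct_star_self_nonneg x
    have hdne : d ≠ 0 := fun h => hx (dotProduct_star_self_eq_zero.mp h)
    have hdim : d.im = 0 := (Complex.nonneg_iff.mp hd0).2.symm
    have hdre : 0 < d.re := by
      rcases lt_or_eq_of_le (Complex.nonneg_iff.mp hd0).1 with h | h
      · exact h
      · exact absurd (Complex.ext h.symm hdim) hdne
    set r : ℝ := Real.sqrt d.re with hr
    have hrpos : 0 < r := Real.sqrt_pos.mpr hdre
    have hr2 : r * r = d.re := Real.mul_self_sqrt hdre.le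
    set y : Fin n → ℂ := ((r : ℂ))⁻¹ • x with hy
    have hsy : star y = ((r : ℂ))⁻¹ • star x := by
      rw [hy, star_smul]
      congr 1
      simp [Complex.star_def, Complex.conj_ofReal]
    have scale : ∀ B : Matrix (Fin n) (Fin n) ℂ,
        star y ⬝ᵥ B *ᵥ y = (((r * r : ℝ) : ℂ))⁻¹ * (star x ⬝ᵥ B *ᵥ x) := by
      intro B
      rw [hy, hsy, mulVec_smul, smul_dotProduct, dotProduct_smul, smul_smul, smul_eq_mul]
      push_cast
      ring
    have hyunit : star y ⬝ᵥ y = 1 := by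
      rw [hy, hsy, smul_dotProduct, dotProduct_smul, smul_eq_mul, smul_eq_mul, ← hd]
      have hdeq : d = ((d.re : ℝ) : ℂ) := Complex.ext rfl (by simp [hdim])
      rw [hdeq, ← hr2]
      push_cast
      field_simp
    obtain ⟨-, hineq⟩ := hA y hyunit
    have hAx := scale A
    have c : ℝ := 0
    set u : ℝ := ((r * r : ℝ))⁻¹ with hu
    have hupos : 0 < u := by positivity
    have hre : (star y ⬝ᵥ A *ᵥ y).re = u * (star x ⬝ᵥ A *ᵥ x).re := by
      rw [hAx, ← Complex.ofReal_inv]; exact Complex.re_ofReal_mul _ _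
    have him : (star y ⬝ᵥ A *ᵥ y).im = u * (star x ⬝ᵥ A *ᵥ x).im := by
      rw [hAx, ← Complex.ofReal_inv]; exact Complex.im_ofReal_mul _ _
    rw [hre, him] at hineq
    have habs : u * |(star x ⬝ᵥ A *ᵥ x).im| ≤ u * (Real.tan α * (star x ⬝ᵥ A *ᵥ x).re) := by
      calc u * |(star x ⬝ᵥ A *ᵥ x).im| = |u * (star x ⬝ᵥ A *ᵥ x).im| := by
            rw [abs_mul, abs_of_pos hupos]
      _ ≤ Real.tan α * (u * (star x ⬝ᵥ A *ᵥ x).re) := hineq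
      _ = u * (Real.tan α * (star x ⬝ᵥ A *ᵥ x).re) := by ring
    have hfin : |(star x ⬝ᵥ A *ᵥ x).im| ≤ Real.tan α * (star x ⬝ᵥ A *ᵥ x).re :=
      le_of_mul_le_mul_left habs hupos
    -- now convert to Re/Im parts
    have hq := form_decomp A x
    have haim : (star x ⬝ᵥ matRe A *ᵥ x).im = 0 := herm_dot_im (matRe_herm A) x
    have hbim : (star x ⬝ᵥ matIm A *ᵥ x).im = 0 := herm_dot_im (matIm_herm A) x
    have hqre : (star x ⬝ᵥ A *ᵥ x).re = (star x ⬝ᵥ matRe A *ᵥ x).re := by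
      rw [hq]; simp [hbim]
    have hqim : (star x ⬝ᵥ A *ᵥ x).im = (star x ⬝ᵥ matIm A *ᵥ x).re := by
      rw [hq]; simp [haim]
    rwa [hqre, hqim] at hfin

lemma real_smul_herm {B : Matrix (Fin n) (Fin n) ℂ} (hB : B.IsHermitian) (r : ℝ) :
    ((r : ℂ) • B).IsHermitian := by
  show _ = _
  rw [conjTranspose_smul, hB.eq]
  congr 1
  simp [Complex.star_def, Complex.conj_ofReal]

lemma tanR_sub_S_psd {α : ℝ} {A : Matrix (Fin n) (Fin n) ℂ} (hA : InSector α A) :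
    (((Real.tan α : ℂ)) • matRe A - matIm A).PosSemidef := by
  apply psd_of_forms ((real_smul_herm (matRe_herm A) _).sub (matIm_herm A))
  intro x
  have h := sector_bound hA x
  have : star x ⬝ᵥ ((Real.tan α : ℂ) • matRe A - matIm A) *ᵥ x
      = (Real.tan α : ℂ) * (star x ⬝ᵥ matRe A *ᵥ x) - star x ⬝ᵥ matIm A *ᵥ x := by
    rw [sub_mulVec, dotProduct_sub, smul_mulVec, dotProduct_smul, smul_eq_mul]
  rw [this]
  rw [Complex.sub_re, Complex.re_ofReal_mul]
  have := abs_le.mp h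
  linarith [this.2]

lemma tanR_add_S_psd {α : ℝ} {A : Matrix (Fin n) (Fin n) ℂ} (hA : InSector α A) :
    (((Real.tan α : ℂ)) • matRe A + matIm A).PosSemidef := by
  apply psd_of_forms ((real_smul_herm (matRe_herm A) _).add (matIm_herm A))
  intro x
  have h := sector_bound hA x
  have : star x ⬝ᵥ ((Real.tan α : ℂ) • matRe A + matIm A) *ᵥ x
      = (Real.tan α : ℂ) * (star x ⬝ᵥ matRe A *ᵥ x) + star x ⬝ᵥ matIm A *ᵥ x := by
    rw [add_mulVec, dotProduct_add, smul_mulVec, dotProduct_smul, smul_eq_mul]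
  rw [this]
  rw [Complex.add_re, Complex.re_ofReal_mul]
  have := abs_le.mp h
  linarith [this.1]

/-- commuting product of a PSD matrix with `c•1 - P`. -/
lemma psd_mul_comm_psd {k : ℕ} {P : Matrix (Fin k) (Fin k) ℂ} (hP : P.PosSemidef) (c : ℂ)
    (hQ : (c • (1 : Matrix (Fin k) (Fin k) ℂ) - P).PosSemidef) :
    (P * (c • (1 : Matrix (Fin k) (Fin k) ℂ) - P)).PosSemidef := by
  set Q := c • (1 : Matrix (Fin k) (Fin k) ℂ) - P with hQdef
  have hVV : hP.sqrt * hP.sqrt = P := hP.sqrt_mul_self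
  have hVH : hP.sqrt.IsHermitian := hP.posSemidef_sqrt.isHermitian
  have hcomm : hP.sqrt * Q = Q * hP.sqrt := by
    rw [hQdef]
    rw [Matrix.mul_sub, Matrix.sub_mul, Matrix.mul_smul, Matrix.smul_mul,
      Matrix.mul_one, Matrix.one_mul]
    congr 1
    calc hP.sqrt * P = hP.sqrt * (hP.sqrt * hP.sqrt) := by rw [hVV]
    _ = (hP.sqrt * hP.sqrt) * hP.sqrt := by rw [Matrix.mul_assoc]
    _ = P * hP.sqrt := by rw [hVV]
  have key : P * Q = hP.sqrt * Q * hP.sqrtᴴ := by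
    calc P * Q = hP.sqrt * (hP.sqrt * Q) := by rw [← Matrix.mul_assoc, hVV]
    _ = hP.sqrt * (Q * hP.sqrt) := by rw [hcomm]
    _ = hP.sqrt * Q * hP.sqrtᴴ := by rw [hVH.eq, Matrix.mul_assoc]
  rw [key]
  exact hQ.mul_mul_conjTranspose_same hP.sqrt

lemma smul_one_posdef {k : ℕ} {r : ℝ} (hr : 0 < r) :
    ((r : ℂ) • (1 : Matrix (Fin k) (Fin k) ℂ)).PosDef := by
  rw [smul_one_eq_diagonal]
  exact posDef_diagonal_iff.mpr fun i => Complex.zero_lt_real.mpr hr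

lemma sqrt_det_isUnit {R : Matrix (Fin n) (Fin n) ℂ} (hR : R.PosDef) :
    IsUnit (hR.posSemidef.sqrt).det := by
  have hWW := hR.posSemidef.sqrt_mul_self
  have hdet : hR.posSemidef.sqrt.det * hR.posSemidef.sqrt.det = R.det := by
    rw [← det_mul, hWW]
  have hd : R.det ≠ 0 := hR.det_pos.ne'
  apply isUnit_of_mul_isUnit_left (y := hR.posSemidef.sqrt.det)
  rw [hdet]
  exact isUnit_iff_ne_zero.mpr hd

lemma inv_ub {R : Matrix (Fin n) (Fin n) ℂ} (hR : R.PosDef) {c : ℝ} (hc : 0 < c)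
    (h : (R - (c : ℂ) • 1).PosSemidef) :
    (((c⁻¹ : ℝ) : ℂ) • (1 : Matrix (Fin n) (Fin n) ℂ) - R⁻¹).PosSemidef := by
  set W := hR.posSemidef.sqrt with hWdef
  have hWW : W * W = R := hR.posSemidef.sqrt_mul_self
  have hWH : Wᴴ = W := hR.posSemidef.posSemidef_sqrt.isHermitian.eq
  haveI : Invertible R := R.invertibleOfIsUnitDet (isUnit_iff_ne_zero.mpr hR.det_pos.ne')
  haveI : Invertible W := W.invertibleOfIsUnitDet (sqrt_det_isUnit hR)
  have hconj : (R⁻¹ * W)ᴴ = W * R⁻¹ := by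
    rw [conjTranspose_mul, conjTranspose_nonsing_inv, hR.isHermitian.eq, hWH]
  have hWRW : W * R * W = R * R := by
    rw [← hWW]; simp only [Matrix.mul_assoc]
  have h1 : (R⁻¹ * W) * R * (W * R⁻¹) = 1 := by
    calc (R⁻¹ * W) * R * (W * R⁻¹) = R⁻¹ * (W * R * W) * R⁻¹ := by
          simp only [Matrix.mul_assoc]
    _ = R⁻¹ * (R * R) * R⁻¹ := by rw [hWRW]
    _ = 1 := by
          simp [Matrix.mul_assoc]
  have h2 : (R⁻¹ * W) * ((c : ℂ) • 1) * (W * R⁻¹) = (c : ℂ) • R⁻¹ := by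
    rw [Matrix.mul_smul, Matrix.mul_one, Matrix.smul_mul]
    congr 1
    calc R⁻¹ * W * (W * R⁻¹) = R⁻¹ * (W * W) * R⁻¹ := by simp only [Matrix.mul_assoc]
    _ = R⁻¹ * R * R⁻¹ := by rw [hWW]
    _ = R⁻¹ := by simp
  have key : ((c⁻¹ : ℝ) : ℂ) • (1 : Matrix (Fin n) (Fin n) ℂ) - R⁻¹
      = ((c⁻¹ : ℝ) : ℂ) • ((R⁻¹ * W) * (R - (c : ℂ) • 1) * (R⁻¹ * W)ᴴ) := by
    rw [hconj, Matrix.mul_sub, Matrix.sub_mul, h1, h2, smul_sub, smul_smul]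
    have : ((c⁻¹ : ℝ) : ℂ) * (c : ℂ) = 1 := by
      push_cast
      field_simp
    rw [this, one_smul]
  rw [key]
  exact smul_psd (by positivity) (h.mul_mul_conjTranspose_same _)

lemma inv_lb {R : Matrix (Fin n) (Fin n) ℂ} (hR : R.PosDef) {c : ℝ} (hc : 0 < c)
    (h : ((c : ℂ) • 1 - R).PosSemidef) :
    (R⁻¹ - ((c⁻¹ : ℝ) : ℂ) • (1 : Matrix (Fin n) (Fin n) ℂ)).PosSemidef := by
  set W := hR.posSemidef.sqrt with hWdef
  have hWW : W * W = R := hR.posSemidef.sqrt_mul_self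
  have hWH : Wᴴ = W := hR.posSemidef.posSemidef_sqrt.isHermitian.eq
  haveI : Invertible R := R.invertibleOfIsUnitDet (isUnit_iff_ne_zero.mpr hR.det_pos.ne')
  haveI : Invertible W := W.invertibleOfIsUnitDet (sqrt_det_isUnit hR)
  have hconj : (R⁻¹ * W)ᴴ = W * R⁻¹ := by
    rw [conjTranspose_mul, conjTranspose_nonsing_inv, hR.isHermitian.eq, hWH]
  have hWRW : W * R * W = R * R := by
    rw [← hWW]; simp only [Matrix.mul_assoc]
  have h1 : (R⁻¹ * W) * R * (W * R⁻¹) = 1 := by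
    calc (R⁻¹ * W) * R * (W * R⁻¹) = R⁻¹ * (W * R * W) * R⁻¹ := by
          simp only [Matrix.mul_assoc]
    _ = R⁻¹ * (R * R) * R⁻¹ := by rw [hWRW]
    _ = 1 := by
          simp [Matrix.mul_assoc]
  have h2 : (R⁻¹ * W) * ((c : ℂ) • 1) * (W * R⁻¹) = (c : ℂ) • R⁻¹ := by
    rw [Matrix.mul_smul, Matrix.mul_one, Matrix.smul_mul]
    congr 1
    calc R⁻¹ * W * (W * R⁻¹) = R⁻¹ * (W * W) * R⁻¹ := by simp only [Matrix.mul_assoc]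
    _ = R⁻¹ * R * R⁻¹ := by rw [hWW]
    _ = R⁻¹ := by simp
  have key : R⁻¹ - ((c⁻¹ : ℝ) : ℂ) • (1 : Matrix (Fin n) (Fin n) ℂ)
      = ((c⁻¹ : ℝ) : ℂ) • ((R⁻¹ * W) * ((c : ℂ) • 1 - R) * (R⁻¹ * W)ᴴ) := by
    rw [hconj, Matrix.mul_sub, Matrix.sub_mul, h1, h2, smul_sub, smul_smul]
    have : ((c⁻¹ : ℝ) : ℂ) * (c : ℂ) = 1 := by
      push_cast
      field_simp
    rw [this, one_smul]
  rw [key]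
  exact smul_psd (by positivity) (h.mul_mul_conjTranspose_same _)

/-- `S R⁻¹ S ≤ t² R` from `±S ≤ t R`. -/
lemma srs_le {R S : Matrix (Fin n) (Fin n) ℂ} (hR : R.PosDef) {t : ℝ} (ht : 0 ≤ t)
    (hs1 : ((t : ℂ) • R - S).PosSemidef) (hs2 : ((t : ℂ) • R + S).PosSemidef) :
    (((t ^ 2 : ℝ) : ℂ) • R - S * R⁻¹ * S).PosSemidef := by
  set W := hR.posSemidef.sqrt with hWdef
  have hWW : W * W = R := hR.posSemidef.sqrt_mul_self
  have hWH : Wᴴ = W := hR.posSemidef.posSemidef_sqrt.isHermitian.eq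
  haveI : Invertible R := R.invertibleOfIsUnitDet (isUnit_iff_ne_zero.mpr hR.det_pos.ne')
  haveI : Invertible W := W.invertibleOfIsUnitDet (sqrt_det_isUnit hR)
  have hWiH : (W⁻¹)ᴴ = W⁻¹ := by rw [conjTranspose_nonsing_inv, hWH]
  have hWRW : W⁻¹ * R * W⁻¹ = 1 := by
    rw [← hWW]
    simp [Matrix.mul_assoc]
  set T := W⁻¹ * S * W⁻¹ with hTdef
  have hP : ((t : ℂ) • 1 - T).PosSemidef := by
    have e : (t : ℂ) • (1 : Matrix (Fin n) (Fin n) ℂ) - T = W⁻¹ * ((t : ℂ) • R - S) * (W⁻¹)ᴴ := by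
      rw [hWiH, Matrix.mul_sub, Matrix.sub_mul, Matrix.mul_smul, Matrix.smul_mul, hWRW]
    rw [e]
    exact hs1.mul_mul_conjTranspose_same _
  have hQ : ((t : ℂ) • 1 + T).PosSemidef := by
    have e : (t : ℂ) • (1 : Matrix (Fin n) (Fin n) ℂ) + T = W⁻¹ * ((t : ℂ) • R + S) * (W⁻¹)ᴴ := by
      rw [hWiH, Matrix.mul_add, Matrix.add_mul, Matrix.mul_smul, Matrix.smul_mul, hWRW]
    rw [e]
    exact hs2.mul_mul_conjTranspose_same _
  have h2t : (((2 * t : ℝ)) : ℂ) • (1 : Matrix (Fin n) (Fin n) ℂ) - ((t : ℂ) • 1 + T)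
      = (t : ℂ) • 1 - T := by
    push_cast
    module
  have hprod := psd_mul_comm_psd hQ (((2 * t : ℝ)) : ℂ) (by rw [h2t]; exact hP)
  rw [h2t] at hprod
  have hexpand : ((t : ℂ) • (1 : Matrix (Fin n) (Fin n) ℂ) + T) * ((t : ℂ) • 1 - T)
      = ((t ^ 2 : ℝ) : ℂ) • 1 - T * T := by
    push_cast
    simp only [Matrix.add_mul, Matrix.mul_sub, Matrix.smul_mul, Matrix.mul_smul,
      Matrix.mul_one, Matrix.one_mul, smul_smul, smul_sub]
    module
  rw [hexpand] at hprod
  have hRinv : R⁻¹ = W⁻¹ * W⁻¹ := by rw [← hWW, Matrix.mul_inv_rev]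
  have hfin : ((t ^ 2 : ℝ) : ℂ) • R - S * R⁻¹ * S
      = W * (((t ^ 2 : ℝ) : ℂ) • 1 - T * T) * Wᴴ := by
    rw [hWH, Matrix.mul_sub, Matrix.sub_mul, Matrix.mul_smul, Matrix.smul_mul]
    congr 1
    · rw [Matrix.mul_one, hWW]
    · rw [hTdef, hRinv]
      simp [Matrix.mul_assoc]
  rw [hfin]
  exact hprod.mul_mul_conjTranspose_same _

lemma sandwich {R S B : Matrix (Fin n) (Fin n) ℂ} [Invertible R]
    (hB : B = R + Complex.I • S) (hBH : Bᴴ = R - Complex.I • S) :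
    B * R⁻¹ * Bᴴ = R + S * R⁻¹ * S := by
  rw [hBH, hB]
  have hI : (Complex.I • S) * R⁻¹ * (Complex.I • S) = (Complex.I * Complex.I) • (S * R⁻¹ * S) := by
    rw [Matrix.smul_mul, Matrix.smul_mul, Matrix.mul_smul, smul_smul]
  simp only [Matrix.add_mul, Matrix.mul_sub, Matrix.mul_add, Matrix.sub_mul]
  rw [hI, Complex.I_mul_I]
  have h1 : R * R⁻¹ * R = R := by simp
  have h2 : R * R⁻¹ * (Complex.I • S) = Complex.I • S := by
    rw [Matrix.mul_nonsing_inv _ (isUnit_det_of_invertible R), Matrix.one_mul]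
  have h3 : Complex.I • S * R⁻¹ * R = Complex.I • S := by
    rw [Matrix.mul_assoc, Matrix.nonsing_inv_mul _ (isUnit_det_of_invertible R), Matrix.mul_one]
  rw [h1, h2, h3]
  module

lemma det_ne_zero_of_posdef_re {A : Matrix (Fin n) (Fin n) ℂ} (hR : (matRe A).PosDef) :
    A.det ≠ 0 := by
  intro hdet
  obtain ⟨v, hv, hv0⟩ := (Matrix.exists_mulVec_eq_zero_iff).mpr hdet
  have h0 : star v ⬝ᵥ A *ᵥ v = 0 := by rw [hv0, dotProduct_zero]
  have hdec := form_decomp A v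
  rw [h0] at hdec
  have hbim : (star v ⬝ᵥ matIm A *ᵥ v).im = 0 := herm_dot_im (matIm_herm A) v
  have hre := congrArg Complex.re hdec
  simp only [Complex.zero_re, Complex.add_re, Complex.mul_re, Complex.I_re, Complex.I_im,
    hbim, zero_mul, one_mul, mul_zero] at hre
  have hpos := hR.re_dotProduct_pos hv
  rw [RCLike.re_to_complex] at hpos
  linarith

lemma matRe_inv_eq {A : Matrix (Fin n) (Fin n) ℂ} [Invertible A] :
    matRe A⁻¹ = A⁻¹ * matRe A * (A⁻¹)ᴴ := by
  haveI : Invertible Aᴴ :=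
    Aᴴ.invertibleOfIsUnitDet (by rw [det_conjTranspose]; exact (isUnit_det_of_invertible A).star)
  show (2⁻¹ : ℂ) • (A⁻¹ + (A⁻¹)ᴴ) = A⁻¹ * ((2⁻¹ : ℂ) • (A + Aᴴ)) * (A⁻¹)ᴴ
  rw [conjTranspose_nonsing_inv, Matrix.mul_smul, Matrix.smul_mul]
  congr 1
  rw [Matrix.mul_add, Matrix.add_mul]
  have h1 : A⁻¹ * A * (Aᴴ)⁻¹ = (Aᴴ)⁻¹ := by
    rw [Matrix.nonsing_inv_mul _ (isUnit_det_of_invertible A), Matrix.one_mul]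
  have h2 : A⁻¹ * Aᴴ * (Aᴴ)⁻¹ = A⁻¹ := by
    rw [Matrix.mul_assoc, Matrix.mul_nonsing_inv _ (isUnit_det_of_invertible Aᴴ), Matrix.mul_one]
  rw [h1, h2, add_comm]

lemma matRe_inv_psd {A : Matrix (Fin n) (Fin n) ℂ} [Invertible A] (hR : (matRe A).PosDef) :
    (matRe A⁻¹).PosSemidef := by
  rw [matRe_inv_eq]
  exact hR.posSemidef.mul_mul_conjTranspose_same _

lemma sector_key {α : ℝ} {A : Matrix (Fin n) (Fin n) ℂ} (hα : α ∈ Set.Ico 0 (Real.pi / 2))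
    (hA : InSector α A) (hR : (matRe A).PosDef) :
    ((((Real.cos α)⁻¹ ^ 2 : ℝ) : ℂ) • matRe A⁻¹ - (matRe A)⁻¹).PosSemidef := by
  obtain ⟨hα0, hαlt⟩ := hα
  have hcos : 0 < Real.cos α := by
    apply Real.cos_pos_of_mem_Ioo
    constructor
    · linarith [Real.pi_pos]
    · exact hαlt
  have ht : 0 ≤ Real.tan α := by
    rw [Real.tan_eq_sin_div_cos]
    apply div_nonneg _ hcos.le
    apply Real.sin_nonneg_of_nonneg_of_le_pi hα0
    linarith [Real.pi_pos]
  have hsec : ((Real.cos α)⁻¹ ^ 2 : ℝ) = Real.tan α ^ 2 + 1 := by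
    rw [inv_pow, ← Real.inv_one_add_tan_sq hcos.ne', inv_inv]
    ring
  haveI : Invertible A := A.invertibleOfIsUnitDet
    (isUnit_iff_ne_zero.mpr (det_ne_zero_of_posdef_re hR))
  haveI : Invertible (matRe A) :=
    (matRe A).invertibleOfIsUnitDet (isUnit_iff_ne_zero.mpr hR.det_pos.ne')
  have hSRS := srs_le hR ht (tanR_sub_S_psd hA) (tanR_add_S_psd hA)
  have hsand : A * (matRe A)⁻¹ * Aᴴ = matRe A + matIm A * (matRe A)⁻¹ * matIm A :=
    sandwich (re_add_I_im A).symm (conjT_eq A)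
  have hRinvEq : (matRe A)⁻¹
      = A⁻¹ * (matRe A + matIm A * (matRe A)⁻¹ * matIm A) * (A⁻¹)ᴴ := by
    rw [← hsand, conjTranspose_nonsing_inv]
    haveI : Invertible Aᴴ :=
      Aᴴ.invertibleOfIsUnitDet (by rw [det_conjTranspose]; exact (isUnit_det_of_invertible A).star)
    calc (matRe A)⁻¹ = (A⁻¹ * A) * (matRe A)⁻¹ * (Aᴴ * (Aᴴ)⁻¹) := by
          rw [Matrix.nonsing_inv_mul _ (isUnit_det_of_invertible A),
            Matrix.mul_nonsing_inv _ (isUnit_det_of_invertible Aᴴ), Matrix.one_mul,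
            Matrix.mul_one]
    _ = A⁻¹ * (A * (matRe A)⁻¹ * Aᴴ) * (Aᴴ)⁻¹ := by simp only [Matrix.mul_assoc]
  have hid : (((Real.cos α)⁻¹ ^ 2 : ℝ) : ℂ) • matRe A⁻¹ - (matRe A)⁻¹
      = A⁻¹ * (((Real.tan α ^ 2 : ℝ) : ℂ) • matRe A
          - matIm A * (matRe A)⁻¹ * matIm A) * (A⁻¹)ᴴ := by
    conv_lhs => rw [matRe_inv_eq, hRinvEq]
    have hcast : (((Real.cos α)⁻¹ ^ 2 : ℝ) : ℂ) = ((Real.tan α ^ 2 : ℝ) : ℂ) + 1 := by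
      rw [hsec]; push_cast; ring
    rw [hcast]
    simp only [Matrix.mul_add, Matrix.add_mul, Matrix.mul_sub, Matrix.sub_mul,
      Matrix.mul_smul, Matrix.smul_mul, Matrix.mul_assoc]
    module
  rw [hid]
  exact hSRS.mul_mul_conjTranspose_same _

end SectorProof

/-- For a sector matrix `A` of angle `α ∈ [0, π/2)` with `0 < m·I ≤ Re A ≤ M·I`, `h = M/m`,
and every normalized positive linear map `Φ`,
`(Φ((Re A)⁻¹))² ≤ sec⁴(α)K(h)(Φ(Re(A⁻¹)))²` in the Loewner order. -/
theorem stmt12 {n l : ℕ} {α : ℝ} (hα : α ∈ Set.Ico 0 (Real.pi / 2))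
    {A : Matrix (Fin n) (Fin n) ℂ} (hA : InSector α A)
    {m M : ℝ} (hm : 0 < m) (hmM : m ≤ M)
    (h1 : (matRe A - m • 1).PosSemidef)
    (h2 : (M • (1 : Matrix (Fin n) (Fin n) ℂ) - matRe A).PosSemidef)
    (Φ : Matrix (Fin n) (Fin n) ℂ →ₗ[ℂ] Matrix (Fin l) (Fin l) ℂ)
    (hΦpos : ∀ X : Matrix (Fin n) (Fin n) ℂ, X.PosSemidef → (Φ X).PosSemidef)
    (hΦ1 : Φ 1 = 1) :
    (((Real.cos α)⁻¹ ^ 4 * kant (M / m)) • Φ (matRe A⁻¹) ^ 2 -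
      Φ ((matRe A)⁻¹) ^ 2).PosSemidef := by
  have hMpos : 0 < M := lt_of_lt_of_le hm hmM
  have h1' : (matRe A - (m : ℂ) • 1).PosSemidef := by rwa [SectorProof.realSmul] at h1
  have h2' : ((M : ℂ) • 1 - matRe A).PosSemidef := by rwa [SectorProof.realSmul] at h2
  have hR : (matRe A).PosDef := by
    have hsum := (SectorProof.smul_one_posdef (k := n) hm).add_posSemidef h1'
    have e : (m : ℂ) • (1 : Matrix (Fin n) (Fin n) ℂ) + (matRe A - (m : ℂ) • 1) = matRe A := by
      abel
    rwa [e] at hsum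
  haveI : Invertible A := A.invertibleOfIsUnitDet
    (isUnit_iff_ne_zero.mpr (SectorProof.det_ne_zero_of_posdef_re hR))
  have hub := SectorProof.inv_ub hR hm h1'
  have hlb := SectorProof.inv_lb hR hMpos h2'
  have hkey := SectorProof.sector_key hα hA hR
  have hYpsd0 := SectorProof.matRe_inv_psd hR
  have hRiPsd : ((matRe A)⁻¹).PosSemidef := hR.inv.posSemidef
  set X := Φ ((matRe A)⁻¹) with hXdef
  set Y := Φ (matRe A⁻¹) with hYdef
  have hX : X.PosSemidef := hΦpos _ hRiPsd
  have hY : Y.PosSemidef := hΦpos _ hYpsd0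
  have hXub : (((m⁻¹ : ℝ) : ℂ) • 1 - X).PosSemidef := by
    have h := hΦpos _ hub
    rwa [map_sub, _root_.map_smul, hΦ1] at h
  have hXlb : (X - ((M⁻¹ : ℝ) : ℂ) • 1).PosSemidef := by
    have h := hΦpos _ hlb
    rwa [map_sub, _root_.map_smul, hΦ1] at h
  have hZX : ((((Real.cos α)⁻¹ ^ 2 : ℝ) : ℂ) • Y - X).PosSemidef := by
    have h := hΦpos _ hkey
    rwa [map_sub, _root_.map_smul] at h
  set s : ℝ := (Real.cos α)⁻¹ ^ 2 with hs
  set K : ℝ := kant (M / m) with hKdef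
  set a : ℝ := M⁻¹ with ha
  set b : ℝ := m⁻¹ with hb
  obtain ⟨c, hc⟩ : ∃ c : ℝ, c = 2 * (b * a) / (b + a) := ⟨_, rfl⟩
  have hapos : 0 < a := by rw [ha]; positivity
  have hbpos : 0 < b := by rw [hb]; positivity
  have hba : b + a ≠ 0 := by positivity
  have hba2 : b * a ≠ 0 := by positivity
  have hKalt : K = (b + a) ^ 2 / (4 * (b * a)) := by
    rw [hKdef, kant, ha, hb]
    rw [div_eq_div_iff (by positivity) (by positivity)]
    field_simp
  have hKpos : 0 < K := by rw [hKalt]; positivity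
  have h2Kc : 2 * K * c = b + a := by
    rw [hKalt, hc]
    field_simp
    ring
  have hKc2 : K * (c * c) = b * a := by
    rw [hKalt, hc]
    field_simp
    ring
  have hc1C := congrArg (fun r : ℝ => (r : ℂ)) h2Kc
  push_cast at hc1C
  have hc2C := congrArg (fun r : ℝ => (r : ℂ)) hKc2
  push_cast at hc2C
  have hcoefC : (((Real.cos α)⁻¹ ^ 4 * K : ℝ) : ℂ) = (K : ℂ) * ((s : ℂ) * (s : ℂ)) := by
    rw [hs]
    push_cast
    ring
  have hZcHerm : ((s : ℂ) • Y - (c : ℂ) • (1 : Matrix (Fin l) (Fin l) ℂ)).IsHermitian :=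
    (SectorProof.real_smul_herm hY.isHermitian s).sub
      (SectorProof.real_smul_herm isHermitian_one c)
  have hE1 : ((K : ℂ) • (((s : ℂ) • Y - (c : ℂ) • 1) * ((s : ℂ) • Y - (c : ℂ) • 1))).PosSemidef := by
    have h := posSemidef_conjTranspose_mul_self ((s : ℂ) • Y - (c : ℂ) • 1)
    rw [hZcHerm.eq] at h
    exact SectorProof.smul_psd hKpos.le h
  have hE2 : (((b + a : ℝ) : ℂ) • ((s : ℂ) • Y - X)).PosSemidef :=
    SectorProof.smul_psd (by positivity) hZX
  have hE3 : ((X - (a : ℂ) • 1) * ((b : ℂ) • 1 - X)).PosSemidef := by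
    have hfact : (((b - a : ℝ) : ℂ) • (1 : Matrix (Fin l) (Fin l) ℂ) - (X - (a : ℂ) • 1))
        = (b : ℂ) • 1 - X := by
      push_cast
      module
    have h := SectorProof.psd_mul_comm_psd hXlb (((b - a : ℝ)) : ℂ) (by rw [hfact]; exact hXub)
    rwa [hfact] at h
  rw [SectorProof.realSmul, pow_two, pow_two]
  have hbig : (((Real.cos α)⁻¹ ^ 4 * K : ℝ) : ℂ) • (Y * Y) - X * X
      = (K : ℂ) • (((s : ℂ) • Y - (c : ℂ) • 1) * ((s : ℂ) • Y - (c : ℂ) • 1))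
        + ((b + a : ℝ) : ℂ) • ((s : ℂ) • Y - X)
        + ((X - (a : ℂ) • 1) * ((b : ℂ) • 1 - X)) := by
    rw [hcoefC]
    simp only [Matrix.sub_mul, Matrix.mul_sub, Matrix.smul_mul, Matrix.mul_smul,
      Matrix.mul_one, Matrix.one_mul, smul_smul, smul_sub, smul_add, sub_smul, add_smul]
    match_scalars
    all_goals push_cast
    all_goals try ring
    all_goals try linear_combination (-(s : ℂ)) * hc1C
    all_goals try linear_combination (s : ℂ) * hc1C
    all_goals try linear_combination hc2C
    all_goals try linear_combination -hc2C
    all_goals try linear_combination (s : ℂ) * hc1C + hc2C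
    all_goals try linear_combination (-(s : ℂ)) * hc1C - hc2C
    all_goals try linear_combination 2 * (s : ℂ) * hc1C + hc2C
    all_goals try linear_combination (-2) * (s : ℂ) * hc1C - hc2C
    all_goals try linear_combination 2 * (s : ℂ) * hc1C - hc2C
    all_goals linear_combination (-2) * (s : ℂ) * hc1C + hc2C
  rw [hbig]
  exact (hE1.add hE2).add hE3
end

section
/- Let A_1, …, A_k ∈ M_n(ℂ) be accretive matrices with 0 < m·I_n ≤ Re(A_i) ≤ M·I_n for all i, where 0 < m ≤ M. Then for every normalized positive multilinear map Φ : M_n(ℂ)^k → M_l(ℂ), one has M^k·m^k·Φ(Re(A_1^{-1}), …, Re(A_k^{-1})) + Φ(Re A_1, …, Re A_k) ≤ (M^k + m^k)·I_l in the Loewner order. -/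
open Matrix
open scoped ComplexOrder

set_option linter.unusedTactic false

section Aux

variable {n : ℕ}

lemma rsmul (c : ℝ) (X : Matrix (Fin n) (Fin n) ℂ) : c • X = ((c : ℂ)) • X := by
  ext i j; simp [Matrix.smul_apply, Complex.real_smul]

lemma psd_smul {c : ℝ} (hc : 0 ≤ c) {X : Matrix (Fin n) (Fin n) ℂ}
    (hX : X.PosSemidef) : (((c : ℂ)) • X).PosSemidef := by
  refine Matrix.PosSemidef.of_dotProduct_mulVec_nonneg ?_ ?_
  · unfold Matrix.IsHermitian
    rw [conjTranspose_smul, hX.1.eq]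
    congr 1
    simp
  · intro x
    rw [smul_mulVec, dotProduct_smul]
    exact smul_nonneg (by exact_mod_cast hc) (hX.dotProduct_mulVec_nonneg x)

lemma psd_sum {ι : Type*} (t : Finset ι) (f : ι → Matrix (Fin n) (Fin n) ℂ)
    (h : ∀ s ∈ t, (f s).PosSemidef) : (∑ s ∈ t, f s).PosSemidef :=
  Finset.sum_induction f _ (fun _ _ ha hb => ha.add hb) Matrix.PosSemidef.zero h

lemma phi_mono {l k : ℕ}
    (Φ : MultilinearMap ℂ (fun _ : Fin k => Matrix (Fin n) (Fin n) ℂ)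
      (Matrix (Fin l) (Fin l) ℂ))
    (hΦpos : ∀ X : Fin k → Matrix (Fin n) (Fin n) ℂ,
      (∀ i, (X i).PosSemidef) → (Φ X).PosSemidef)
    (X Y : Fin k → Matrix (Fin n) (Fin n) ℂ)
    (hX : ∀ i, (X i).PosSemidef) (hXY : ∀ i, (Y i - X i).PosSemidef) :
    (Φ Y - Φ X).PosSemidef := by
  have hYeq : Y = X + (Y - X) := by funext i; simp
  have hexp : Φ Y = ∑ s : Finset (Fin k), Φ (s.piecewise X (Y - X)) := by
    conv_lhs => rw [hYeq]
    exact Φ.map_add_univ X (Y - X)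
  have hterm : ∀ s : Finset (Fin k), (Φ (s.piecewise X (Y - X))).PosSemidef := by
    intro s
    apply hΦpos
    intro i
    by_cases h : i ∈ s
    · simpa [Finset.piecewise, h] using hX i
    · simpa [Finset.piecewise, h] using hXY i
  have huniv : Φ (Finset.univ.piecewise X (Y - X)) = Φ X := by
    congr 1
    simp [Finset.piecewise]
  have : Φ Y = Φ X + ∑ s ∈ (Finset.univ : Finset (Finset (Fin k))).erase Finset.univ,
      Φ (s.piecewise X (Y - X)) := by
    rw [hexp, ← huniv]
    exact (Finset.add_sum_erase _ _ (Finset.mem_univ _)).symm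
  rw [this]
  have := psd_sum ((Finset.univ : Finset (Finset (Fin k))).erase Finset.univ)
    (fun s => Φ (s.piecewise X (Y - X))) (fun s _ => hterm s)
  simpa using this

variable {n : ℕ}

lemma basis_dot (H : Matrix (Fin n) (Fin n) ℂ) (hH : H.IsHermitian) (i : Fin n) :
    star ⇑(hH.eigenvectorBasis i) ⬝ᵥ ⇑(hH.eigenvectorBasis i) = 1 := by
  have h1 : ‖hH.eigenvectorBasis i‖ = 1 := hH.eigenvectorBasis.orthonormal.1 i
  have h2 : (inner ℂ (hH.eigenvectorBasis i) (hH.eigenvectorBasis i) : ℂ)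
      = star ⇑(hH.eigenvectorBasis i) ⬝ᵥ ⇑(hH.eigenvectorBasis i) :=
    (EuclideanSpace.inner_eq_star_dotProduct _ _).trans (dotProduct_comm _ _)
  rw [← h2, inner_self_eq_norm_sq_to_K, h1]
  norm_num

lemma eig_bounds {H : Matrix (Fin n) (Fin n) ℂ} (hH : H.IsHermitian) {c : ℝ}
    (h : (H - c • 1).PosSemidef) (i : Fin n) : c ≤ hH.eigenvalues i := by
  set v : Fin n → ℂ := ⇑(hH.eigenvectorBasis i) with hv
  have hq := h.dotProduct_mulVec_nonneg v
  have hmul : (H - c • (1 : Matrix (Fin n) (Fin n) ℂ)) *ᵥ v = H *ᵥ v - c • v := by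
    rw [sub_mulVec, smul_mulVec, one_mulVec]
  rw [hmul, dotProduct_sub, dotProduct_smul, hH.mulVec_eigenvectorBasis,
    dotProduct_smul, basis_dot H hH i] at hq
  have hre := (Complex.nonneg_iff.mp hq).1
  simp only [Complex.sub_re, Complex.real_smul, Complex.ofReal_mul] at hre
  simp only [smul_eq_mul, mul_one, Complex.sub_re, Complex.mul_re, Complex.ofReal_re,
    Complex.ofReal_im] at hre
  linarith [hre]

lemma eig_bounds' {H : Matrix (Fin n) (Fin n) ℂ} (hH : H.IsHermitian) {c : ℝ}
    (h : (c • (1 : Matrix (Fin n) (Fin n) ℂ) - H).PosSemidef) (i : Fin n) :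
    hH.eigenvalues i ≤ c := by
  set v : Fin n → ℂ := ⇑(hH.eigenvectorBasis i) with hv
  have hq := h.dotProduct_mulVec_nonneg v
  have hmul : (c • (1 : Matrix (Fin n) (Fin n) ℂ) - H) *ᵥ v = c • v - H *ᵥ v := by
    rw [sub_mulVec, smul_mulVec, one_mulVec]
  rw [hmul, dotProduct_sub, dotProduct_smul, hH.mulVec_eigenvectorBasis,
    dotProduct_smul, basis_dot H hH i] at hq
  have hre := (Complex.nonneg_iff.mp hq).1
  simp only [smul_eq_mul, mul_one, Complex.sub_re, Complex.mul_re, Complex.ofReal_re,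
    Complex.ofReal_im, Complex.real_smul] at hre
  linarith [hre]

lemma key_inv {H : Matrix (Fin n) (Fin n) ℂ} (hH : H.PosDef)
    {m M : ℝ} (hm : 0 < m)
    (h1 : (H - m • 1).PosSemidef) (h2 : (M • (1 : Matrix (Fin n) (Fin n) ℂ) - H).PosSemidef) :
    ((((M + m : ℝ)) : ℂ) • 1 - H - (((M * m : ℝ)) : ℂ) • H⁻¹).PosSemidef := by
  have hHer := hH.isHermitian
  set U : Matrix (Fin n) (Fin n) ℂ := (hHer.eigenvectorUnitary : Matrix (Fin n) (Fin n) ℂ) with hU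
  have hUU : U * star U = 1 := (Matrix.mem_unitaryGroup_iff).mp hHer.eigenvectorUnitary.2
  have hUU' : star U * U = 1 := (Matrix.mem_unitaryGroup_iff').mp hHer.eigenvectorUnitary.2
  set lam := hHer.eigenvalues with hlam
  have hlb : ∀ i, m ≤ lam i := eig_bounds hHer h1
  have hub : ∀ i, lam i ≤ M := eig_bounds' hHer h2
  have hpos : ∀ i, (0:ℝ) < lam i := fun i => lt_of_lt_of_le hm (hlb i)
  have hspec : H = U * diagonal (RCLike.ofReal ∘ lam) * star U := hHer.spectral_theorem
  have hinv : H⁻¹ = U * diagonal (fun i => ((lam i : ℂ))⁻¹) * star U := by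
    apply Matrix.inv_eq_right_inv
    rw [hspec]
    have : (star U) * (U * diagonal (fun i => ((lam i : ℂ))⁻¹) * star U)
        = diagonal (fun i => ((lam i : ℂ))⁻¹) * star U := by
      rw [← mul_assoc, ← mul_assoc, hUU', one_mul]
    rw [mul_assoc (U * diagonal (RCLike.ofReal ∘ lam)), this, ← mul_assoc, mul_assoc U,
      diagonal_mul_diagonal, mul_assoc]
    have hfun : (fun i => (RCLike.ofReal ∘ lam) i * ((lam i : ℂ))⁻¹) = fun _ : Fin n => (1 : ℂ) := by
      funext i
      simp only [Function.comp_apply]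
      have hne : ((lam i : ℂ)) ≠ 0 := by exact_mod_cast (hpos i).ne'
      exact mul_inv_cancel₀ hne
    have hd : (diagonal (fun i => (RCLike.ofReal ∘ lam) i * ((lam i : ℂ))⁻¹))
        = (1 : Matrix (Fin n) (Fin n) ℂ) := by rw [hfun, diagonal_one]
    rw [hd, one_mul, hUU]
  have hone : (1 : Matrix (Fin n) (Fin n) ℂ) = U * 1 * star U := by rw [mul_one, hUU]
  have hgoal : (((M + m : ℝ)) : ℂ) • 1 - H - (((M * m : ℝ)) : ℂ) • H⁻¹
      = U * diagonal (fun i => (((M + m - lam i - M * m * (lam i)⁻¹ : ℝ)) : ℂ)) * star U := by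
    conv_lhs => rw [hinv, hspec, hone]
    rw [← Matrix.smul_mul, ← Matrix.mul_smul, ← Matrix.smul_mul, ← Matrix.mul_smul,
      ← Matrix.sub_mul, ← Matrix.mul_sub, ← Matrix.sub_mul, ← Matrix.mul_sub]
    congr 2
    ext i j
    rcases eq_or_ne i j with rfl | hij
    · simp only [Matrix.sub_apply, Matrix.smul_apply, Matrix.diagonal_apply_eq,
        Matrix.one_apply_eq, Function.comp_apply, smul_eq_mul, mul_one]
      have hco : (RCLike.ofReal (lam i) : ℂ) = ((lam i : ℝ) : ℂ) := rfl
      rw [hco]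
      push_cast
      ring
    · simp [Matrix.sub_apply, Matrix.smul_apply, Matrix.diagonal_apply_ne _ hij,
        Matrix.one_apply_ne hij]
  rw [hgoal]
  apply Matrix.PosSemidef.mul_mul_conjTranspose_same
  · apply Matrix.posSemidef_diagonal_iff.mpr
    intro i
    have : (0:ℝ) ≤ M + m - lam i - M * m * (lam i)⁻¹ := by
      have h := hpos i
      rw [show M + m - lam i - M * m * (lam i)⁻¹ = (M - lam i) * (lam i - m) * (lam i)⁻¹ by
        field_simp; ring]
      exact mul_nonneg (mul_nonneg (by linarith [hub i]) (by linarith [hlb i])) (by positivity)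
    exact_mod_cast this


variable {n : ℕ}

lemma matRe_conjTranspose (A : Matrix (Fin n) (Fin n) ℂ) : (matRe A)ᴴ = matRe A := by
  unfold matRe
  rw [conjTranspose_smul, conjTranspose_add, conjTranspose_conjTranspose]
  rw [add_comm]
  congr 1
  simp

lemma conjTranspose_eq (A : Matrix (Fin n) (Fin n) ℂ) : Aᴴ = (2:ℂ) • matRe A - A := by
  unfold matRe
  rw [smul_smul]
  norm_num

lemma det_isUnit_of_accretive {A : Matrix (Fin n) (Fin n) ℂ} (hA : (matRe A).PosDef) :
    IsUnit A.det := by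
  by_contra h
  have hdet : A.det = 0 := by
    simpa [isUnit_iff_ne_zero] using h
  obtain ⟨v, hv, hAv⟩ := (Matrix.exists_mulVec_eq_zero_iff).mpr hdet
  have hq : star v ⬝ᵥ matRe A *ᵥ v = 0 := by
    unfold matRe
    rw [smul_mulVec, dotProduct_smul, add_mulVec, hAv]
    have : Aᴴ *ᵥ v = star (star v ᵥ* A) := by
      rw [Matrix.star_vecMul, star_star]
    rw [this]
    have h2 : star v ⬝ᵥ star (star v ᵥ* A) = star ((star v ᵥ* A) ⬝ᵥ v) :=
      Matrix.star_dotProduct_star _ _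
    rw [zero_add, h2, ← Matrix.dotProduct_mulVec, hAv, dotProduct_zero]
    simp
  have := hA.dotProduct_mulVec_pos hv
  rw [hq] at this
  simp at this

lemma matRe_inv_eq {A : Matrix (Fin n) (Fin n) ℂ} (hA : (matRe A).PosDef) :
    matRe A⁻¹ = A⁻¹ * matRe A * (A⁻¹)ᴴ := by
  have hdet := det_isUnit_of_accretive hA
  have hdetH : IsUnit Aᴴ.det := by
    rw [Matrix.det_conjTranspose]
    exact hdet.star
  have h1 : A⁻¹ * A = 1 := Matrix.nonsing_inv_mul A hdet
  have h2 : Aᴴ * (Aᴴ)⁻¹ = 1 := Matrix.mul_nonsing_inv Aᴴ hdetH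
  unfold matRe
  rw [Matrix.mul_smul, Matrix.smul_mul]
  congr 1
  rw [Matrix.conjTranspose_nonsing_inv, Matrix.mul_add, Matrix.add_mul, h1, one_mul,
    mul_assoc, h2, mul_one, add_comm]

lemma matRe_inv_psd {A : Matrix (Fin n) (Fin n) ℂ} (hA : (matRe A).PosDef) :
    (matRe A⁻¹).PosSemidef := by
  rw [matRe_inv_eq hA]
  exact hA.posSemidef.mul_mul_conjTranspose_same _

lemma fan_psd {A : Matrix (Fin n) (Fin n) ℂ} (hA : (matRe A).PosDef) :
    ((matRe A)⁻¹ - matRe A⁻¹).PosSemidef := by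
  have hdet := det_isUnit_of_accretive hA
  have hdetH : IsUnit Aᴴ.det := by
    rw [Matrix.det_conjTranspose]; exact hdet.star
  have hA1 : A⁻¹ * A = 1 := Matrix.nonsing_inv_mul A hdet
  have hAH1 : Aᴴ * (Aᴴ)⁻¹ = 1 := Matrix.mul_nonsing_inv Aᴴ hdetH
  have hHdet : IsUnit (matRe A).det := (Matrix.isUnit_iff_isUnit_det _).mp hA.isUnit
  have hH1 : (matRe A)⁻¹ * matRe A = 1 := Matrix.nonsing_inv_mul _ hHdet
  have hH2 : matRe A * (matRe A)⁻¹ = 1 := Matrix.mul_nonsing_inv _ hHdet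
  have h2H : A + Aᴴ = (2:ℂ) • matRe A := by
    unfold matRe
    rw [smul_smul]
    norm_num
  have hBH : (A⁻¹ * (matRe A - A))ᴴ = (matRe A - Aᴴ) * (Aᴴ)⁻¹ := by
    rw [conjTranspose_mul, conjTranspose_sub, matRe_conjTranspose,
      Matrix.conjTranspose_nonsing_inv]
  have e1 : (matRe A - A) * (matRe A)⁻¹ * (matRe A - Aᴴ)
      = A * (matRe A)⁻¹ * Aᴴ - matRe A := by
    rw [Matrix.sub_mul, hH2, Matrix.sub_mul, one_mul, Matrix.mul_sub, mul_assoc A _ (matRe A),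
      hH1, mul_one]
    rw [show matRe A - Aᴴ - (A - A * (matRe A)⁻¹ * Aᴴ)
        = A * (matRe A)⁻¹ * Aᴴ + (matRe A - (A + Aᴴ)) from by abel, h2H, two_smul]
    abel
  have hkey : (matRe A)⁻¹ - matRe A⁻¹
      = (A⁻¹ * (matRe A - A)) * (matRe A)⁻¹ * (A⁻¹ * (matRe A - A))ᴴ := by
    rw [matRe_inv_eq hA, hBH]
    have assoc1 : A⁻¹ * (matRe A - A) * (matRe A)⁻¹ * ((matRe A - Aᴴ) * (Aᴴ)⁻¹)
        = A⁻¹ * ((matRe A - A) * (matRe A)⁻¹ * (matRe A - Aᴴ)) * (Aᴴ)⁻¹ := by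
      noncomm_ring
    rw [assoc1, e1, Matrix.mul_sub, Matrix.sub_mul, Matrix.conjTranspose_nonsing_inv]
    have t1 : A⁻¹ * (A * (matRe A)⁻¹ * Aᴴ) * (Aᴴ)⁻¹ = (matRe A)⁻¹ := by
      rw [← mul_assoc, ← mul_assoc, hA1, one_mul, mul_assoc, hAH1, mul_one]
    rw [t1, mul_assoc]
  rw [hkey]
  exact (hA.inv.posSemidef).mul_mul_conjTranspose_same _

lemma expand_phi {n l k : ℕ}
    (Φ : MultilinearMap ℂ (fun _ : Fin k => Matrix (Fin n) (Fin n) ℂ)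
      (Matrix (Fin l) (Fin l) ℂ))
    (a b : ℂ) (P Q : Fin k → Matrix (Fin n) (Fin n) ℂ) :
    Φ (fun i => a • P i + b • Q i)
      = ∑ s : Finset (Fin k), (a ^ s.card * b ^ sᶜ.card) • Φ (s.piecewise P Q) := by
  have h0 : (fun i => a • P i + b • Q i)
      = (fun i => a • P i) + (fun i => b • Q i) := rfl
  rw [h0, Φ.map_add_univ]
  apply Finset.sum_congr rfl
  intro s _
  have hpw : s.piecewise (fun i => a • P i) (fun i => b • Q i)
      = fun i => (if i ∈ s then a else b) • (s.piecewise P Q i) := by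
    funext i
    by_cases h : i ∈ s <;> simp [Finset.piecewise, h]
  rw [hpw, Φ.map_smul_univ]
  congr 1
  rw [← Finset.prod_mul_prod_compl s]
  congr 1
  · rw [Finset.prod_congr rfl (fun i hi => if_pos hi), Finset.prod_const]
  · rw [Finset.prod_congr rfl (fun i hi => if_neg (Finset.mem_compl.mp hi)), Finset.prod_const]

lemma phi_const_smul {n l k : ℕ}
    (Φ : MultilinearMap ℂ (fun _ : Fin k => Matrix (Fin n) (Fin n) ℂ)
      (Matrix (Fin l) (Fin l) ℂ))
    (a : ℂ) (C : Fin k → Matrix (Fin n) (Fin n) ℂ) :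
    Φ (fun i => a • C i) = a ^ k • Φ C := by
  rw [Φ.map_smul_univ (fun _ => a) C, Finset.prod_const, Finset.card_univ, Fintype.card_fin]
end Aux

lemma per_i {n : ℕ} {A : Matrix (Fin n) (Fin n) ℂ} (hacc : (matRe A).PosDef)
    {m M : ℝ} (hm : 0 < m) (hmM : m ≤ M)
    (h1 : (matRe A - m • 1).PosSemidef)
    (h2 : (M • (1 : Matrix (Fin n) (Fin n) ℂ) - matRe A).PosSemidef) :
    ((((M + m : ℝ)) : ℂ) • 1 - matRe A - (((M * m : ℝ)) : ℂ) • matRe A⁻¹).PosSemidef := by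
  have hk := key_inv hacc hm h1 h2
  have hf := psd_smul (c := M * m) (mul_nonneg (hm.le.trans hmM) hm.le) (fan_psd hacc)
  have := hk.add hf
  have heq : ((((M + m : ℝ)) : ℂ) • 1 - matRe A - (((M * m : ℝ)) : ℂ) • (matRe A)⁻¹)
      + (((M * m : ℝ)) : ℂ) • ((matRe A)⁻¹ - matRe A⁻¹)
      = (((M + m : ℝ)) : ℂ) • 1 - matRe A - (((M * m : ℝ)) : ℂ) • matRe A⁻¹ := by
    rw [smul_sub]
    abel
  rw [heq] at this
  exact this

/-- For accretive matrices `A₁, …, A_k` with `0 < m·I ≤ Re(Aᵢ) ≤ M·I` and every normalized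
positive multilinear map `Φ`,
`M^k m^k Φ(Re(A₁⁻¹), …, Re(A_k⁻¹)) + Φ(Re A₁, …, Re A_k) ≤ (M^k + m^k)·I`. -/
theorem stmt17 {n l k : ℕ} {A : Fin k → Matrix (Fin n) (Fin n) ℂ}
    (hacc : ∀ i, (matRe (A i)).PosDef)
    {m M : ℝ} (hm : 0 < m) (hmM : m ≤ M)
    (h1 : ∀ i, (matRe (A i) - m • 1).PosSemidef)
    (h2 : ∀ i, (M • (1 : Matrix (Fin n) (Fin n) ℂ) - matRe (A i)).PosSemidef)
    (Φ : MultilinearMap ℂ (fun _ : Fin k => Matrix (Fin n) (Fin n) ℂ)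
      (Matrix (Fin l) (Fin l) ℂ))
    (hΦpos : ∀ X : Fin k → Matrix (Fin n) (Fin n) ℂ,
      (∀ i, (X i).PosSemidef) → (Φ X).PosSemidef)
    (hΦ1 : Φ (fun _ => 1) = 1) :
    ((M ^ k + m ^ k) • (1 : Matrix (Fin l) (Fin l) ℂ) -
      ((M ^ k * m ^ k) • Φ (fun i => matRe ((A i)⁻¹)) +
        Φ (fun i => matRe (A i)))).PosSemidef := by
  set B : Fin k → Matrix (Fin n) (Fin n) ℂ := fun i => matRe (A i) with hBdef
  set C : Fin k → Matrix (Fin n) (Fin n) ℂ := fun i => matRe ((A i)⁻¹) with hCdef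
  have hBpsd : ∀ i, (B i).PosSemidef := fun i => (hacc i).posSemidef
  have hCpsd : ∀ i, (C i).PosSemidef := fun i => matRe_inv_psd (hacc i)
  have hDC : ∀ i, ((((M + m : ℝ)) : ℂ) • 1 - B i - (((M * m : ℝ)) : ℂ) • C i).PosSemidef :=
    fun i => per_i (hacc i) hm hmM (h1 i) (h2 i)
  -- the first bracket : Φ D - (M^k m^k) Φ C ⪰ 0 where D i = (M+m)•1 - B i
  set D : Fin k → Matrix (Fin n) (Fin n) ℂ := fun i => (((M + m : ℝ)) : ℂ) • 1 - B i with hDdef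
  have hXC : ∀ i, ((((M * m : ℝ)) : ℂ) • C i).PosSemidef :=
    fun i => psd_smul (mul_nonneg (hm.le.trans hmM) hm.le) (hCpsd i)
  have hDCsub : ∀ i, (D i - (((M * m : ℝ)) : ℂ) • C i).PosSemidef := by
    intro i
    have := hDC i
    have heq : (((M + m : ℝ)) : ℂ) • 1 - B i - (((M * m : ℝ)) : ℂ) • C i
        = D i - (((M * m : ℝ)) : ℂ) • C i := by rw [hDdef]
    rwa [heq] at this
  have hT1 : (Φ D - (((M ^ k * m ^ k : ℝ)) : ℂ) • Φ C).PosSemidef := by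
    have hmono := phi_mono Φ hΦpos (fun i => (((M * m : ℝ)) : ℂ) • C i) D hXC hDCsub
    have hsm : Φ (fun i => (((M * m : ℝ)) : ℂ) • C i) = (((M ^ k * m ^ k : ℝ)) : ℂ) • Φ C := by
      rw [phi_const_smul]
      congr 1
      push_cast
      ring
    rwa [hsm] at hmono
  -- rewrite the goal
  have hgoal : (M ^ k + m ^ k) • (1 : Matrix (Fin l) (Fin l) ℂ) -
      ((M ^ k * m ^ k) • Φ C + Φ B)
      = (Φ D - (((M ^ k * m ^ k : ℝ)) : ℂ) • Φ C)
        + ((((M ^ k + m ^ k : ℝ)) : ℂ) • 1 - Φ D - Φ B) := by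
    rw [rsmul (M ^ k + m ^ k), rsmul (M ^ k * m ^ k)]
    abel
  rw [hgoal]
  apply Matrix.PosSemidef.add hT1
  -- second bracket
  rcases hmM.lt_or_eq with hlt | heq
  · -- case m < M : convexity expansion
    have hMm : (0:ℝ) < M - m := by linarith
    have hMm0 : (0:ℝ) ≤ (M - m)⁻¹ := by positivity
    set P : Fin k → Matrix (Fin n) (Fin n) ℂ :=
      fun i => ((((M - m)⁻¹ : ℝ)) : ℂ) • (((M : ℝ) : ℂ) • 1 - B i) with hPdef
    set Q : Fin k → Matrix (Fin n) (Fin n) ℂ :=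
      fun i => ((((M - m)⁻¹ : ℝ)) : ℂ) • (B i - ((m : ℝ) : ℂ) • 1) with hQdef
    have hPpsd : ∀ i, (P i).PosSemidef := by
      intro i
      apply psd_smul hMm0
      have := h2 i
      rwa [rsmul] at this
    have hQpsd : ∀ i, (Q i).PosSemidef := by
      intro i
      apply psd_smul hMm0
      have := h1 i
      rwa [rsmul] at this
    have hne : ((M : ℂ)) - ((m : ℂ)) ≠ 0 := by
      rw [← Complex.ofReal_sub]
      exact_mod_cast hMm.ne'
    have hPQ : ∀ i, P i + Q i = 1 := by
      intro i
      rw [hPdef, hQdef]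
      simp only
      match_scalars <;> · push_cast; field_simp; try ring
    have hBPQ : ∀ i, (m : ℂ) • P i + (M : ℂ) • Q i = B i := by
      intro i
      rw [hPdef, hQdef]
      simp only
      match_scalars <;> · push_cast; field_simp; try ring
    have hDPQ : ∀ i, (M : ℂ) • P i + (m : ℂ) • Q i = D i := by
      intro i
      rw [hPdef, hQdef, hDdef]
      simp only
      match_scalars <;> · push_cast; field_simp; try ring
    have hone : (1 : Matrix (Fin l) (Fin l) ℂ)
        = ∑ s : Finset (Fin k), Φ (s.piecewise P Q) := by
      have hfun : (fun _ : Fin k => (1 : Matrix (Fin n) (Fin n) ℂ))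
          = fun i => (1:ℂ) • P i + (1:ℂ) • Q i := by
        funext i
        rw [one_smul, one_smul, hPQ i]
      rw [← hΦ1, hfun, expand_phi]
      simp
    have hBexp : Φ B = ∑ s : Finset (Fin k),
        ((m:ℂ) ^ s.card * (M:ℂ) ^ sᶜ.card) • Φ (s.piecewise P Q) := by
      rw [show B = fun i => (m:ℂ) • P i + (M:ℂ) • Q i from funext fun i => (hBPQ i).symm,
        expand_phi]
    have hDexp : Φ D = ∑ s : Finset (Fin k),
        ((M:ℂ) ^ s.card * (m:ℂ) ^ sᶜ.card) • Φ (s.piecewise P Q) := by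
      rw [show D = fun i => (M:ℂ) • P i + (m:ℂ) • Q i from funext fun i => (hDPQ i).symm,
        expand_phi]
    have hsplit : (((M ^ k + m ^ k : ℝ)) : ℂ) • (1 : Matrix (Fin l) (Fin l) ℂ) - Φ D - Φ B
        = ∑ s : Finset (Fin k),
          ((((M ^ k + m ^ k : ℝ)) : ℂ) - (M:ℂ) ^ s.card * (m:ℂ) ^ sᶜ.card
            - (m:ℂ) ^ s.card * (M:ℂ) ^ sᶜ.card) • Φ (s.piecewise P Q) := by
      conv_lhs => rw [hone, hDexp, hBexp]
      rw [Finset.smul_sum, ← Finset.sum_sub_distrib, ← Finset.sum_sub_distrib]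
      apply Finset.sum_congr rfl
      intro s _
      rw [← sub_smul, ← sub_smul]
    rw [hsplit]
    apply psd_sum
    intro s _
    have hcard : s.card + sᶜ.card = k := by
      rw [Finset.card_add_card_compl]
      simp
    have hr : (0:ℝ) ≤ M ^ k + m ^ k - M ^ s.card * m ^ sᶜ.card - m ^ s.card * M ^ sᶜ.card := by
      have hfac := mul_nonneg
        (sub_nonneg.2 (pow_le_pow_left₀ hm.le hmM s.card))
        (sub_nonneg.2 (pow_le_pow_left₀ hm.le hmM sᶜ.card))
      rw [show M ^ k = M ^ s.card * M ^ sᶜ.card from by rw [← pow_add, hcard],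
        show m ^ k = m ^ s.card * m ^ sᶜ.card from by rw [← pow_add, hcard]]
      nlinarith [hfac]
    have hco : (((M ^ k + m ^ k : ℝ)) : ℂ) - (M:ℂ) ^ s.card * (m:ℂ) ^ sᶜ.card
        - (m:ℂ) ^ s.card * (M:ℂ) ^ sᶜ.card
        = (((M ^ k + m ^ k - M ^ s.card * m ^ sᶜ.card - m ^ s.card * M ^ sᶜ.card : ℝ)) : ℂ) := by
      push_cast
      ring
    rw [hco]
    apply psd_smul hr
    apply hΦpos
    intro i
    by_cases h : i ∈ s
    · simpa [Finset.piecewise, h] using hPpsd i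
    · simpa [Finset.piecewise, h] using hQpsd i
  · -- case m = M
    subst heq
    have hY : Φ (fun _ : Fin k => ((m:ℝ):ℂ) • (1 : Matrix (Fin n) (Fin n) ℂ))
        = (((m ^ k : ℝ)) : ℂ) • (1 : Matrix (Fin l) (Fin l) ℂ) := by
      rw [phi_const_smul, hΦ1]
      congr 1
      push_cast
      ring
    have hX2 : ((((m ^ k : ℝ)) : ℂ) • (1 : Matrix (Fin l) (Fin l) ℂ) - Φ B).PosSemidef := by
      have := phi_mono Φ hΦpos B (fun _ => ((m:ℝ):ℂ) • 1) hBpsd (by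
        intro i
        have := h2 i
        rwa [rsmul] at this)
      rwa [hY] at this
    have hDpsd : ∀ i, (D i).PosSemidef := by
      intro i
      have hh2 := h2 i
      rw [rsmul] at hh2
      have hone' : (((m:ℝ):ℂ) • (1 : Matrix (Fin n) (Fin n) ℂ)).PosSemidef :=
        psd_smul hm.le Matrix.PosSemidef.one
      have := hh2.add hone'
      have heq2 : ((m:ℝ):ℂ) • (1 : Matrix (Fin n) (Fin n) ℂ) - B i
          + ((m:ℝ):ℂ) • (1 : Matrix (Fin n) (Fin n) ℂ) = D i := by
        rw [hDdef]
        simp only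
        match_scalars <;> · push_cast; ring
      rwa [heq2] at this
    have hX1 : ((((m ^ k : ℝ)) : ℂ) • (1 : Matrix (Fin l) (Fin l) ℂ) - Φ D).PosSemidef := by
      have := phi_mono Φ hΦpos D (fun _ => ((m:ℝ):ℂ) • 1) hDpsd (by
        intro i
        have hh1 := h1 i
        have heq3 : ((m:ℝ):ℂ) • (1 : Matrix (Fin n) (Fin n) ℂ) - D i = B i - m • 1 := by
          rw [hDdef, rsmul]
          simp only
          match_scalars <;> · push_cast; ring
        rw [heq3]
        exact hh1)
      rwa [hY] at this
    have hfin : (((m ^ k + m ^ k : ℝ)) : ℂ) • (1 : Matrix (Fin l) (Fin l) ℂ) - Φ D - Φ B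
        = ((((m ^ k : ℝ)) : ℂ) • 1 - Φ D) + ((((m ^ k : ℝ)) : ℂ) • 1 - Φ B) := by
      rw [show (((m ^ k + m ^ k : ℝ)) : ℂ) = (((m ^ k : ℝ)) : ℂ) + (((m ^ k : ℝ)) : ℂ) from by
        push_cast; ring, add_smul]
      abel
    rw [hfin]
    exact hX1.add hX2
end
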